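/- arXiv:1501.06937 — 3 statements merged into one kernel-verified Lean document; each statement's English description precedes it below -/
import Mathlib

section
/- The permutation g = (1,2,...,m)(m+1,m+2,m+3,m+4)(m+5,m+6) on the vertex set {1,...,m+6} is a graph automorphism of Γ_m. -/
/-- One-directional edge description of the graph `Γ_m`, on labels `1,…,m+6`. -/
def rel0 (m a b : ℕ) : Prop :=
  (1 ≤ a ∧ a ≤ m - 1 ∧ b = a + 1) ∨ (a = 1 ∧ b = m) ∨
  (a = m+1 ∧ 1 ≤ b ∧ b ≤ m ∧ (b % 4 = 1 ∨ b % 4 = 2)) ∨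
  (a = m+2 ∧ 1 ≤ b ∧ b ≤ m ∧ (b % 4 = 2 ∨ b % 4 = 3)) ∨
  (a = m+3 ∧ 1 ≤ b ∧ b ≤ m ∧ (b % 4 = 3 ∨ b % 4 = 0)) ∨
  (a = m+4 ∧ 1 ≤ b ∧ b ≤ m ∧ (b % 4 = 0 ∨ b % 4 = 1)) ∨
  (a = m+5 ∧ 1 ≤ b ∧ b ≤ m ∧ b % 2 = 1) ∨
  (a = m+6 ∧ 1 ≤ b ∧ b ≤ m ∧ b % 2 = 0) ∨
  (a = m+1 ∧ b = m+5) ∨ (a = m+3 ∧ b = m+5) ∨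
  (a = m+2 ∧ b = m+6) ∨ (a = m+4 ∧ b = m+6)

instance (m a b : ℕ) : Decidable (rel0 m a b) := by unfold rel0; infer_instance

/-- The graph `Γ_m` on vertex set `{1,…,m+6}`, encoded on `Fin (m+6)`
    where the vertex `v : Fin (m+6)` carries the label `v.val + 1`. -/
def Gamma (m : ℕ) : SimpleGraph (Fin (m+6)) where
  Adj a b := a ≠ b ∧ (rel0 m (a.val+1) (b.val+1) ∨ rel0 m (b.val+1) (a.val+1))
  symm := ⟨by intro a b h; exact ⟨fun e => h.1 e.symm, h.2.symm⟩⟩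
  loopless := ⟨by intro a h; exact h.1 rfl⟩

instance (m : ℕ) : DecidableRel (Gamma m).Adj := fun a b =>
  inferInstanceAs (Decidable (a ≠ b ∧ _))

/-- The permutation `g = (1,2,…,m)(m+1,m+2,m+3,m+4)(m+5,m+6)` on labels,
    written on `Fin (m+6)` (label = index + 1). -/
def gFun (m : ℕ) (v : Fin (m+6)) : Fin (m+6) :=
  if h : v.val < m then ⟨(v.val + 1) % m, lt_of_lt_of_le (Nat.mod_lt _ (by omega)) (by omega)⟩
  else if h2 : v.val < m + 3 then ⟨v.val + 1, by omega⟩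
  else if h3 : v.val = m + 3 then ⟨m, by omega⟩
  else if h4 : v.val = m + 4 then ⟨m + 5, by omega⟩
  else ⟨m + 4, by omega⟩

lemma mk1 {m a b : ℕ} (h : 1 ≤ a ∧ a ≤ m - 1 ∧ b = a + 1) : rel0 m a b := Or.inl h
lemma mk2 {m a b : ℕ} (h : a = 1 ∧ b = m) : rel0 m a b := Or.inr (Or.inl h)
lemma mk3 {m a b : ℕ} (h : a = m+1 ∧ 1 ≤ b ∧ b ≤ m ∧ (b % 4 = 1 ∨ b % 4 = 2)) : rel0 m a b :=
  Or.inr (Or.inr (Or.inl h))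
lemma mk4 {m a b : ℕ} (h : a = m+2 ∧ 1 ≤ b ∧ b ≤ m ∧ (b % 4 = 2 ∨ b % 4 = 3)) : rel0 m a b :=
  Or.inr (Or.inr (Or.inr (Or.inl h)))
lemma mk5 {m a b : ℕ} (h : a = m+3 ∧ 1 ≤ b ∧ b ≤ m ∧ (b % 4 = 3 ∨ b % 4 = 0)) : rel0 m a b :=
  Or.inr (Or.inr (Or.inr (Or.inr (Or.inl h))))
lemma mk6 {m a b : ℕ} (h : a = m+4 ∧ 1 ≤ b ∧ b ≤ m ∧ (b % 4 = 0 ∨ b % 4 = 1)) : rel0 m a b :=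
  Or.inr (Or.inr (Or.inr (Or.inr (Or.inr (Or.inl h)))))
lemma mk7 {m a b : ℕ} (h : a = m+5 ∧ 1 ≤ b ∧ b ≤ m ∧ b % 2 = 1) : rel0 m a b :=
  Or.inr (Or.inr (Or.inr (Or.inr (Or.inr (Or.inr (Or.inl h))))))
lemma mk8 {m a b : ℕ} (h : a = m+6 ∧ 1 ≤ b ∧ b ≤ m ∧ b % 2 = 0) : rel0 m a b :=
  Or.inr (Or.inr (Or.inr (Or.inr (Or.inr (Or.inr (Or.inr (Or.inl h)))))))
lemma mk9 {m a b : ℕ} (h : a = m+1 ∧ b = m+5) : rel0 m a b :=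
  Or.inr (Or.inr (Or.inr (Or.inr (Or.inr (Or.inr (Or.inr (Or.inr (Or.inl h))))))))
lemma mk10 {m a b : ℕ} (h : a = m+3 ∧ b = m+5) : rel0 m a b :=
  Or.inr (Or.inr (Or.inr (Or.inr (Or.inr (Or.inr (Or.inr (Or.inr (Or.inr (Or.inl h)))))))))
lemma mk11 {m a b : ℕ} (h : a = m+2 ∧ b = m+6) : rel0 m a b :=
  Or.inr (Or.inr (Or.inr (Or.inr (Or.inr (Or.inr (Or.inr (Or.inr (Or.inr (Or.inr (Or.inl h))))))))))
lemma mk12 {m a b : ℕ} (h : a = m+4 ∧ b = m+6) : rel0 m a b :=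
  Or.inr (Or.inr (Or.inr (Or.inr (Or.inr (Or.inr (Or.inr (Or.inr (Or.inr (Or.inr (Or.inr h))))))))))

def step (m x X : ℕ) : Prop :=
  (1 ≤ x ∧ x < m ∧ X = x+1) ∨ (x = m ∧ X = 1) ∨
  (m+1 ≤ x ∧ x ≤ m+3 ∧ X = x+1) ∨ (x = m+4 ∧ X = m+1) ∨
  (x = m+5 ∧ X = m+6) ∨ (x = m+6 ∧ X = m+5)

lemma fwd (m : ℕ) (hm : 4 ≤ m) (hm4 : m % 4 = 0) {x y X Y : ℕ}
    (hX : step m x X) (hY : step m y Y) (h : rel0 m x y) :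
    rel0 m X Y ∨ rel0 m Y X := by
  unfold step at hX hY
  rcases h with h|h|h|h|h|h|h|h|h|h|h|h
  · rcases Nat.lt_or_ge y m with hy'|hy'
    · exact Or.inl (mk1 (by omega))
    · exact Or.inr (mk2 (by omega))
  · exact Or.inr (mk1 (by omega))
  · exact Or.inl (mk4 (by omega))
  · exact Or.inl (mk5 (by omega))
  · exact Or.inl (mk6 (by omega))
  · exact Or.inl (mk3 (by omega))
  · exact Or.inl (mk8 (by omega))
  · exact Or.inl (mk7 (by omega))
  · exact Or.inl (mk11 (by omega))
  · exact Or.inl (mk12 (by omega))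
  · exact Or.inl (mk10 (by omega))
  · exact Or.inl (mk9 (by omega))

lemma bwd (m : ℕ) (hm : 4 ≤ m) (hm4 : m % 4 = 0) {x y X Y : ℕ}
    (hX : step m x X) (hY : step m y Y) (h : rel0 m X Y) :
    rel0 m x y ∨ rel0 m y x := by
  unfold step at hX hY
  rcases h with h|h|h|h|h|h|h|h|h|h|h|h
  · rcases Nat.lt_or_ge X 2 with hx'|hx'
    · exact Or.inr (mk2 (by omega))
    · exact Or.inl (mk1 (by omega))
  · exact Or.inr (mk1 (by omega))
  · exact Or.inl (mk6 (by omega))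
  · exact Or.inl (mk3 (by omega))
  · exact Or.inl (mk4 (by omega))
  · exact Or.inl (mk5 (by omega))
  · exact Or.inl (mk8 (by omega))
  · exact Or.inl (mk7 (by omega))
  · exact Or.inl (mk12 (by omega))
  · exact Or.inl (mk11 (by omega))
  · exact Or.inl (mk9 (by omega))
  · exact Or.inl (mk10 (by omega))


lemma gFun_spec (m : ℕ) (hm : 4 ≤ m) (v : Fin (m+6)) :
    (v.val + 1 < m ∧ (gFun m v).val = v.val+1) ∨
    (v.val + 1 = m ∧ (gFun m v).val = 0) ∨
    (m ≤ v.val ∧ v.val < m+3 ∧ (gFun m v).val = v.val+1) ∨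
    (v.val = m+3 ∧ (gFun m v).val = m) ∨
    (v.val = m+4 ∧ (gFun m v).val = m+5) ∨
    (v.val = m+5 ∧ (gFun m v).val = m+4) := by
  unfold gFun
  split_ifs with h h2 h3 h4
  · rcases Nat.lt_or_ge (v.val+1) m with h' | h'
    · left; exact ⟨h', Nat.mod_eq_of_lt h'⟩
    · have e : v.val + 1 = m := by omega
      right; left; exact ⟨e, by simp [e]⟩
  · right; right; left; exact ⟨by omega, h2, rfl⟩
  · right; right; right; left; exact ⟨h3, rfl⟩
  · right; right; right; right; left; exact ⟨h4, rfl⟩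
  · right; right; right; right; right; exact ⟨by omega, rfl⟩

lemma step_gFun (m : ℕ) (hm : 4 ≤ m) (v : Fin (m+6)) :
    step m (v.val+1) ((gFun m v).val+1) := by
  have h := gFun_spec m hm v
  unfold step
  omega

lemma gFun_inj (m : ℕ) (hm : 4 ≤ m) : Function.Injective (gFun m) := by
  intro a b h
  have ha := gFun_spec m hm a
  have hb := gFun_spec m hm b
  have hv : (gFun m a).val = (gFun m b).val := congrArg Fin.val h
  exact Fin.ext (by omega)

lemma key (m : ℕ) (hm : 4 ≤ m) (hm4 : m % 4 = 0) (a b : Fin (m+6)) :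
    (rel0 m ((gFun m a).val+1) ((gFun m b).val+1) ∨
     rel0 m ((gFun m b).val+1) ((gFun m a).val+1)) ↔
    (rel0 m (a.val+1) (b.val+1) ∨ rel0 m (b.val+1) (a.val+1)) := by
  have ha := step_gFun m hm a
  have hb := step_gFun m hm b
  constructor
  · rintro (h | h)
    · exact bwd m hm hm4 ha hb h
    · exact (bwd m hm hm4 hb ha h).symm
  · rintro (h | h)
    · exact fwd m hm hm4 ha hb h
    · exact (fwd m hm hm4 hb ha h).symm

/-- `g = (1,…,m)(m+1,…,m+4)(m+5,m+6)` is an automorphism of `Γ_m`. -/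
theorem stmt0 (n m : ℕ) (hn : 2 ≤ n) (hm : m = 2 ^ n) :
    ∃ φ : Gamma m ≃g Gamma m, ⇑φ = gFun m := by
  have hd : 4 ∣ m := by
    subst hm
    exact (pow_dvd_pow 2 hn : (2:ℕ)^2 ∣ 2^n)
  have hm' : 4 ≤ m := Nat.le_of_dvd (by subst hm; positivity) hd
  have hm4 : m % 4 = 0 := by omega
  have hbij : Function.Bijective (gFun m) :=
    (Finite.injective_iff_bijective).mp (gFun_inj m hm')
  refine ⟨{ toEquiv := Equiv.ofBijective (gFun m) hbij, map_rel_iff' := ?_ }, rfl⟩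
  intro a b
  show (Gamma m).Adj (gFun m a) (gFun m b) ↔ (Gamma m).Adj a b
  constructor
  · rintro ⟨hne, hr⟩
    exact ⟨fun e => hne (congrArg (gFun m) e), (key m hm' hm4 a b).mp hr⟩
  · rintro ⟨hne, hr⟩
    exact ⟨fun e => hne (gFun_inj m hm' e), (key m hm' hm4 a b).mpr hr⟩
end

section
/- In the graph Γ_m, the vertices m+5 and m+6 are exactly the vertices of eccentricity 3; all other vertices have eccentricity at most 2. Consequently every automorphism of Γ_m permutes the set {m+5, m+6}. -/
/-- Eccentricity of a vertex: supremum of graph distances to all vertices. -/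
noncomputable def ecc (m : ℕ) (v : Fin (m + 6)) : ℕ∞ :=
  ⨆ u : Fin (m + 6), (Gamma m).edist v u

/-! helper constructor lemmas for rel0 -/

section helpers
variable {m a b : ℕ}

def relsym (m a b : ℕ) : Prop := rel0 m a b ∨ rel0 m b a

lemma relsym_symm (h : relsym m a b) : relsym m b a := h.symm

lemma r1 (h1 : 1 ≤ a) (h2 : a ≤ m-1) (h3 : b = a+1) : rel0 m a b := Or.inl ⟨h1, h2, h3⟩
lemma r2 (h1 : a = 1) (h2 : b = m) : rel0 m a b := Or.inr (Or.inl ⟨h1, h2⟩)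
lemma r1h (ha : a = m+1) (h1 : 1 ≤ b) (h2 : b ≤ m) (h3 : b%4=1 ∨ b%4=2) : rel0 m a b :=
  Or.inr (Or.inr (Or.inl ⟨ha, h1, h2, h3⟩))
lemma r2h (ha : a = m+2) (h1 : 1 ≤ b) (h2 : b ≤ m) (h3 : b%4=2 ∨ b%4=3) : rel0 m a b :=
  Or.inr (Or.inr (Or.inr (Or.inl ⟨ha, h1, h2, h3⟩)))
lemma r3h (ha : a = m+3) (h1 : 1 ≤ b) (h2 : b ≤ m) (h3 : b%4=3 ∨ b%4=0) : rel0 m a b :=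
  Or.inr (Or.inr (Or.inr (Or.inr (Or.inl ⟨ha, h1, h2, h3⟩))))
lemma r4h (ha : a = m+4) (h1 : 1 ≤ b) (h2 : b ≤ m) (h3 : b%4=0 ∨ b%4=1) : rel0 m a b :=
  Or.inr (Or.inr (Or.inr (Or.inr (Or.inr (Or.inl ⟨ha, h1, h2, h3⟩)))))
lemma r5o (ha : a = m+5) (h1 : 1 ≤ b) (h2 : b ≤ m) (h3 : b%2=1) : rel0 m a b :=
  Or.inr (Or.inr (Or.inr (Or.inr (Or.inr (Or.inr (Or.inl ⟨ha, h1, h2, h3⟩))))))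
lemma r6e (ha : a = m+6) (h1 : 1 ≤ b) (h2 : b ≤ m) (h3 : b%2=0) : rel0 m a b :=
  Or.inr (Or.inr (Or.inr (Or.inr (Or.inr (Or.inr (Or.inr (Or.inl ⟨ha, h1, h2, h3⟩)))))))
lemma r15 (ha : a = m+1) (hb : b = m+5) : rel0 m a b :=
  Or.inr (Or.inr (Or.inr (Or.inr (Or.inr (Or.inr (Or.inr (Or.inr (Or.inl ⟨ha, hb⟩))))))))
lemma r35 (ha : a = m+3) (hb : b = m+5) : rel0 m a b :=
  Or.inr (Or.inr (Or.inr (Or.inr (Or.inr (Or.inr (Or.inr (Or.inr (Or.inr (Or.inl ⟨ha, hb⟩)))))))))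
lemma r26 (ha : a = m+2) (hb : b = m+6) : rel0 m a b :=
  Or.inr (Or.inr (Or.inr (Or.inr (Or.inr (Or.inr (Or.inr (Or.inr (Or.inr (Or.inr (Or.inl ⟨ha, hb⟩))))))))))
lemma r46 (ha : a = m+4) (hb : b = m+6) : rel0 m a b :=
  Or.inr (Or.inr (Or.inr (Or.inr (Or.inr (Or.inr (Or.inr (Or.inr (Or.inr (Or.inr (Or.inr ⟨ha, hb⟩))))))))))

lemma relsym_irrefl (hm : 4 ≤ m) (h : relsym m a a) : False := by
  unfold relsym rel0 at h; omega

end helpers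

/-- Key combinatorial lemma: any two distinct labels, not both in `{m+5,m+6}`,
are adjacent or have a common neighbor. -/
lemma key1 (m x y : ℕ) (hm4 : m % 4 = 0) (hm : 4 ≤ m)
    (hx : 1 ≤ x) (hy2 : y ≤ m+6) (hxy : x ≠ y) (hle : x ≤ y)
    (hside : ¬(m+5 ≤ x ∧ m+5 ≤ y)) :
    relsym m x y ∨ ∃ w, 1 ≤ w ∧ w ≤ m+6 ∧ relsym m x w ∧ relsym m w y := by
  by_cases hyc : y ≤ m
  · by_cases h1 : x % 2 = 1 ∧ y % 2 = 1
    · exact Or.inr ⟨m+5, by omega, by omega,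
        Or.inr (r5o rfl hx (by omega) (by omega)), Or.inl (r5o rfl (by omega) hyc (by omega))⟩
    by_cases h2 : x % 2 = 0 ∧ y % 2 = 0
    · exact Or.inr ⟨m+6, by omega, by omega,
        Or.inr (r6e rfl hx (by omega) (by omega)), Or.inl (r6e rfl (by omega) hyc (by omega))⟩
    by_cases h3 : (x%4=1∧y%4=2)∨(x%4=2∧y%4=1)
    · exact Or.inr ⟨m+1, by omega, by omega,
        Or.inr (r1h rfl hx (by omega) (by omega)), Or.inl (r1h rfl (by omega) hyc (by omega))⟩
    by_cases h4 : (x%4=1∧y%4=0)∨(x%4=0∧y%4=1)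
    · exact Or.inr ⟨m+4, by omega, by omega,
        Or.inr (r4h rfl hx (by omega) (by omega)), Or.inl (r4h rfl (by omega) hyc (by omega))⟩
    by_cases h5 : (x%4=3∧y%4=2)∨(x%4=2∧y%4=3)
    · exact Or.inr ⟨m+2, by omega, by omega,
        Or.inr (r2h rfl hx (by omega) (by omega)), Or.inl (r2h rfl (by omega) hyc (by omega))⟩
    · exact Or.inr ⟨m+3, by omega, by omega,
        Or.inr (r3h rfl hx (by omega) (by omega)), Or.inl (r3h rfl (by omega) hyc (by omega))⟩
  by_cases hy1 : y = m+1
  · have hxm : x ≤ m := by omega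
    by_cases h1 : x % 4 = 3
    · exact Or.inr ⟨x-1, by omega, by omega,
        Or.inr (r1 (by omega) (by omega) (by omega)), Or.inr (r1h (by omega) (by omega) (by omega) (by omega))⟩
    by_cases h2 : x % 4 = 0
    · by_cases h3 : x = m
      · exact Or.inr ⟨1, by omega, by omega,
          Or.inr (r2 rfl (by omega)), Or.inr (r1h (by omega) (by omega) (by omega) (by omega))⟩
      · exact Or.inr ⟨x+1, by omega, by omega,
          Or.inl (r1 (by omega) (by omega) rfl), Or.inr (r1h (by omega) (by omega) (by omega) (by omega))⟩
    · exact Or.inl (Or.inr (r1h (by omega) (by omega) (by omega) (by omega)))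
  by_cases hy1' : y = m+2
  · by_cases h1 : x = m+1
    · exact Or.inr ⟨2, by omega, by omega,
        Or.inl (r1h (by omega) (by omega) (by omega) (by omega)),
        Or.inr (r2h (by omega) (by omega) (by omega) (by omega))⟩
    have hxm : x ≤ m := by omega
    by_cases h2 : x % 4 = 0
    · exact Or.inr ⟨x-1, by omega, by omega,
        Or.inr (r1 (by omega) (by omega) (by omega)), Or.inr (r2h (by omega) (by omega) (by omega) (by omega))⟩
    by_cases h3 : x % 4 = 1
    · exact Or.inr ⟨x+1, by omega, by omega,
        Or.inl (r1 (by omega) (by omega) rfl), Or.inr (r2h (by omega) (by omega) (by omega) (by omega))⟩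
    · exact Or.inl (Or.inr (r2h (by omega) (by omega) (by omega) (by omega)))
  by_cases hy3 : y = m+3
  · by_cases h1 : x = m+1
    · exact Or.inr ⟨m+5, by omega, by omega,
        Or.inl (r15 (by omega) (by omega)), Or.inr (r35 (by omega) (by omega))⟩
    by_cases h2 : x = m+2
    · exact Or.inr ⟨3, by omega, by omega,
        Or.inl (r2h (by omega) (by omega) (by omega) (by omega)),
        Or.inr (r3h (by omega) (by omega) (by omega) (by omega))⟩
    have hxm : x ≤ m := by omega
    by_cases h3 : x % 4 = 1
    · by_cases h4 : x = 1
      · exact Or.inr ⟨m, by omega, by omega,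
          Or.inl (r2 (by omega) rfl), Or.inr (r3h (by omega) (by omega) (by omega) (by omega))⟩
      · exact Or.inr ⟨x-1, by omega, by omega,
          Or.inr (r1 (by omega) (by omega) (by omega)), Or.inr (r3h (by omega) (by omega) (by omega) (by omega))⟩
    by_cases h5 : x % 4 = 2
    · exact Or.inr ⟨x+1, by omega, by omega,
        Or.inl (r1 (by omega) (by omega) rfl), Or.inr (r3h (by omega) (by omega) (by omega) (by omega))⟩
    · exact Or.inl (Or.inr (r3h (by omega) (by omega) (by omega) (by omega)))
  by_cases hy4 : y = m+4
  · by_cases h1 : x = m+1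
    · exact Or.inr ⟨1, by omega, by omega,
        Or.inl (r1h (by omega) (by omega) (by omega) (by omega)),
        Or.inr (r4h (by omega) (by omega) (by omega) (by omega))⟩
    by_cases h2 : x = m+2
    · exact Or.inr ⟨m+6, by omega, by omega,
        Or.inl (r26 (by omega) (by omega)), Or.inr (r46 (by omega) (by omega))⟩
    by_cases h3 : x = m+3
    · exact Or.inr ⟨m, by omega, by omega,
        Or.inl (r3h (by omega) (by omega) (by omega) (by omega)),
        Or.inr (r4h (by omega) (by omega) (by omega) (by omega))⟩
    have hxm : x ≤ m := by omega
    by_cases h4 : x % 4 = 2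
    · exact Or.inr ⟨x-1, by omega, by omega,
        Or.inr (r1 (by omega) (by omega) (by omega)), Or.inr (r4h (by omega) (by omega) (by omega) (by omega))⟩
    by_cases h5 : x % 4 = 3
    · exact Or.inr ⟨x+1, by omega, by omega,
        Or.inl (r1 (by omega) (by omega) rfl), Or.inr (r4h (by omega) (by omega) (by omega) (by omega))⟩
    · exact Or.inl (Or.inr (r4h (by omega) (by omega) (by omega) (by omega)))
  by_cases hy5 : y = m+5
  · by_cases h1 : x ≤ m
    · by_cases h2 : x % 2 = 0
      · exact Or.inr ⟨x-1, by omega, by omega,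
          Or.inr (r1 (by omega) (by omega) (by omega)), Or.inr (r5o (by omega) (by omega) (by omega) (by omega))⟩
      · exact Or.inl (Or.inr (r5o (by omega) (by omega) (by omega) (by omega)))
    by_cases h3 : x = m+1
    · exact Or.inl (Or.inl (r15 (by omega) (by omega)))
    by_cases h4 : x = m+2
    · exact Or.inr ⟨3, by omega, by omega,
        Or.inl (r2h (by omega) (by omega) (by omega) (by omega)),
        Or.inr (r5o (by omega) (by omega) (by omega) (by omega))⟩
    by_cases h5 : x = m+3
    · exact Or.inl (Or.inl (r35 (by omega) (by omega)))
    · exact Or.inr ⟨1, by omega, by omega,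
        Or.inl (r4h (by omega) (by omega) (by omega) (by omega)),
        Or.inr (r5o (by omega) (by omega) (by omega) (by omega))⟩
  · -- y = m+6
    have hy6 : y = m+6 := by omega
    have hx4 : x ≤ m+4 := by omega
    by_cases h1 : x ≤ m
    · by_cases h2 : x % 2 = 1
      · exact Or.inr ⟨x+1, by omega, by omega,
          Or.inl (r1 (by omega) (by omega) rfl), Or.inr (r6e (by omega) (by omega) (by omega) (by omega))⟩
      · exact Or.inl (Or.inr (r6e (by omega) (by omega) (by omega) (by omega)))
    by_cases h3 : x = m+1
    · exact Or.inr ⟨2, by omega, by omega,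
        Or.inl (r1h (by omega) (by omega) (by omega) (by omega)),
        Or.inr (r6e (by omega) (by omega) (by omega) (by omega))⟩
    by_cases h4 : x = m+2
    · exact Or.inl (Or.inl (r26 (by omega) (by omega)))
    by_cases h5 : x = m+3
    · exact Or.inr ⟨4, by omega, by omega,
        Or.inl (r3h (by omega) (by omega) (by omega) (by omega)),
        Or.inr (r6e (by omega) (by omega) (by omega) (by omega))⟩
    · exact Or.inl (Or.inl (r46 (by omega) (by omega)))

lemma key_s6 (m x y : ℕ) (hm4 : m % 4 = 0) (hm : 4 ≤ m)
    (hx : 1 ≤ x) (hx2 : x ≤ m+6) (hy : 1 ≤ y) (hy2 : y ≤ m+6) (hxy : x ≠ y)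
    (hside : ¬(m+5 ≤ x ∧ m+5 ≤ y)) :
    relsym m x y ∨ ∃ w, 1 ≤ w ∧ w ≤ m+6 ∧ relsym m x w ∧ relsym m w y := by
  rcases le_total x y with h | h
  · exact key1 m x y hm4 hm hx hy2 hxy h hside
  · rcases key1 m y x hm4 hm hy hx2 (Ne.symm hxy) h (by omega) with h' | ⟨w, h1, h2, h3, h4⟩
    · exact Or.inl h'.symm
    · exact Or.inr ⟨w, h1, h2, h4.symm, h3.symm⟩

open SimpleGraph

lemma adj_of_relsym (m : ℕ) (hm : 4 ≤ m) (a b : Fin (m+6))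
    (h : relsym m (a.val+1) (b.val+1)) : (Gamma m).Adj a b := by
  refine ⟨fun e => ?_, h⟩
  subst e; exact relsym_irrefl hm h

lemma edist_le_one_of_adj {m : ℕ} {a b : Fin (m+6)} (h : (Gamma m).Adj a b) :
    (Gamma m).edist a b ≤ 1 :=
  le_of_eq (edist_eq_one_iff_adj.2 h)

/-- any two vertices not both in the top pair are at distance ≤ 2 -/
lemma dist2 (m : ℕ) (hm4 : m % 4 = 0) (hm : 4 ≤ m) (a b : Fin (m+6))
    (hside : a.val < m+4 ∨ b.val < m+4) : (Gamma m).edist a b ≤ 2 := by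
  by_cases heq : a = b
  · subst heq; simp
  have hne : a.val + 1 ≠ b.val + 1 := fun e => heq (Fin.ext (by omega))
  rcases key_s6 m (a.val+1) (b.val+1) hm4 hm (by omega) (by omega) (by omega) (by omega)
      hne (by omega) with h | ⟨w, hw1, hw2, hxw, hwy⟩
  · calc (Gamma m).edist a b ≤ 1 := edist_le_one_of_adj (adj_of_relsym m hm a b h)
      _ ≤ 2 := by norm_num
  · set w' : Fin (m+6) := ⟨w-1, by omega⟩ with hw'
    have hwv : w'.val + 1 = w := by simp [hw']; omega
    have h1 : (Gamma m).Adj a w' := adj_of_relsym m hm a w' (by rw [hwv]; exact hxw)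
    have h2 : (Gamma m).Adj w' b := adj_of_relsym m hm w' b (by rw [hwv]; exact hwy)
    calc (Gamma m).edist a b ≤ (Gamma m).edist a w' + (Gamma m).edist w' b :=
          SimpleGraph.edist_triangle
      _ ≤ 1 + 1 := add_le_add (edist_le_one_of_adj h1) (edist_le_one_of_adj h2)
      _ = 2 := by norm_num

lemma adjmk (m : ℕ) (hm : 4 ≤ m) (i j : ℕ) (hi : i < m+6) (hj : j < m+6)
    (h : relsym m (i+1) (j+1)) : (Gamma m).Adj ⟨i, hi⟩ ⟨j, hj⟩ :=
  adj_of_relsym m hm _ _ h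

lemma dist3 (m : ℕ) (hm4 : m % 4 = 0) (hm : 4 ≤ m) :
    (Gamma m).edist ⟨m+4, by omega⟩ ⟨m+5, by omega⟩ ≤ 3 := by
  have h1 : (Gamma m).Adj ⟨m+4, by omega⟩ ⟨0, by omega⟩ :=
    adjmk m hm (m+4) 0 (by omega) (by omega) (Or.inl (r5o rfl (by omega) (by omega) (by omega)))
  calc (Gamma m).edist ⟨m+4, by omega⟩ ⟨m+5, by omega⟩
      ≤ (Gamma m).edist ⟨m+4, by omega⟩ ⟨0, by omega⟩ +
        (Gamma m).edist (⟨0, by omega⟩ : Fin (m+6)) ⟨m+5, by omega⟩ :=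
        SimpleGraph.edist_triangle
    _ ≤ 1 + 2 := add_le_add (edist_le_one_of_adj h1)
        (dist2 m hm4 hm _ _ (Or.inl (by show (0:ℕ) < m+4; omega)))
    _ = 3 := by norm_num

lemma dist_ge3 (m : ℕ) (hm4 : m % 4 = 0) (hm : 4 ≤ m) :
    3 ≤ (Gamma m).edist ⟨m+4, by omega⟩ ⟨m+5, by omega⟩ := by
  rw [SimpleGraph.edist_eq_sInf]
  refine le_sInf ?_
  rintro b ⟨p, rfl⟩
  have hlen : 3 ≤ p.length := by
    cases p with
    | cons h q =>
      cases q with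
      | nil =>
        exfalso
        have ha := h.2
        simp only [Fin.val_mk] at ha
        unfold rel0 at ha
        omega
      | cons h2 q2 =>
        cases q2 with
        | nil =>
          exfalso
          have ha := h.2
          have hb := h2.2
          simp only [Fin.val_mk] at ha hb
          unfold rel0 at ha hb
          omega
        | cons h3 q3 => simp [SimpleGraph.Walk.length_cons]
  show (3:ℕ∞) ≤ (p.length : ℕ∞)
  exact_mod_cast hlen
lemma edist_map_le {V : Type*} {G G' : SimpleGraph V} (f : G ≃g G') (u v : V) :
    G'.edist (f u) (f v) ≤ G.edist u v := by
  rw [SimpleGraph.edist_eq_sInf, SimpleGraph.edist_eq_sInf]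
  refine le_sInf ?_
  rintro b ⟨p, rfl⟩
  exact sInf_le ⟨p.map f.toHom, by simp⟩

lemma edist_map {V : Type*} {G G' : SimpleGraph V} (f : G ≃g G') (u v : V) :
    G'.edist (f u) (f v) = G.edist u v := by
  refine le_antisymm (edist_map_le f u v) ?_
  have := edist_map_le f.symm (f u) (f v)
  simpa using this

lemma ecc_le2 (m : ℕ) (hm4 : m % 4 = 0) (hm : 4 ≤ m) (v : Fin (m+6)) (hv : v.val < m+4) :
    ecc m v ≤ 2 :=
  iSup_le fun u => dist2 m hm4 hm v u (Or.inl hv)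

lemma ecc_a5 (m : ℕ) (hm4 : m % 4 = 0) (hm : 4 ≤ m) :
    ecc m ⟨m+4, by omega⟩ = 3 := by
  refine le_antisymm (iSup_le fun u => ?_) ?_
  · rcases lt_trichotomy u.val (m+4) with h | h | h
    · exact le_trans (dist2 m hm4 hm _ u (Or.inr h)) (by norm_num)
    · have e : u = ⟨m+4, by omega⟩ := Fin.ext (show u.val = m+4 from h)
      rw [e]; simp
    · have e : u = ⟨m+5, by omega⟩ := Fin.ext (show u.val = m+5 by omega)
      rw [e]; exact dist3 m hm4 hm
  · exact le_trans (dist_ge3 m hm4 hm) (le_iSup _ (⟨m+5, by omega⟩ : Fin (m+6)))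

lemma ecc_a6 (m : ℕ) (hm4 : m % 4 = 0) (hm : 4 ≤ m) :
    ecc m ⟨m+5, by omega⟩ = 3 := by
  refine le_antisymm (iSup_le fun u => ?_) ?_
  · rcases lt_trichotomy u.val (m+4) with h | h | h
    · exact le_trans (dist2 m hm4 hm _ u (Or.inr h)) (by norm_num)
    · have e : u = ⟨m+4, by omega⟩ := Fin.ext (show u.val = m+4 from h)
      rw [e, SimpleGraph.edist_comm]
      exact dist3 m hm4 hm
    · have e : u = ⟨m+5, by omega⟩ := Fin.ext (show u.val = m+5 by omega)
      rw [e]; simp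
  · refine le_trans (dist_ge3 m hm4 hm) ?_
    rw [SimpleGraph.edist_comm]
    exact le_iSup _ (⟨m+4, by omega⟩ : Fin (m+6))

lemma ecc_iff (m : ℕ) (hm4 : m % 4 = 0) (hm : 4 ≤ m) (v : Fin (m+6)) :
    ecc m v = 3 ↔ m + 4 ≤ v.val := by
  constructor
  · intro h
    by_contra hv
    have h2 := ecc_le2 m hm4 hm v (by omega)
    rw [h] at h2
    exact absurd h2 (by decide)
  · intro hv
    rcases Nat.lt_or_ge v.val (m+5) with h | h
    · have e : v = ⟨m+4, by omega⟩ := Fin.ext (show v.val = m+4 by omega)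
      rw [e]; exact ecc_a5 m hm4 hm
    · have e : v = ⟨m+5, by omega⟩ := Fin.ext (show v.val = m+5 by omega)
      rw [e]; exact ecc_a6 m hm4 hm

lemma ecc_iso (m : ℕ) (f : Gamma m ≃g Gamma m) (v : Fin (m+6)) :
    ecc m (f v) = ecc m v := by
  unfold ecc
  refine le_antisymm (iSup_le fun u => ?_) (iSup_le fun u => ?_)
  · have h : (Gamma m).edist (f v) u = (Gamma m).edist v (f.symm u) := by
      conv_lhs => rw [show u = f (f.symm u) by simp]
      exact edist_map f v (f.symm u)
    rw [h]; exact le_iSup _ _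
  · rw [show (Gamma m).edist v u = (Gamma m).edist (f v) (f u) from (edist_map f v u).symm]
    exact le_iSup _ _

/-- `m+5` and `m+6` are exactly the vertices of eccentricity `3`
    in `Γ_m`; all others have eccentricity at most `2`; consequently every
    automorphism permutes `{m+5, m+6}`. -/
theorem stmt6 (n m : ℕ) (hn : 2 ≤ n) (hm : m = 2 ^ n) :
    (∀ v : Fin (m + 6), ecc m v = 3 ↔ m + 4 ≤ v.val) ∧
    (∀ v : Fin (m + 6), v.val < m + 4 → ecc m v ≤ 2) ∧
    (∀ f : Gamma m ≃g Gamma m, ∀ v : Fin (m + 6),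
      m + 4 ≤ v.val → m + 4 ≤ (f v).val) := by
  obtain ⟨k, hk⟩ : (2:ℕ)^2 ∣ 2^n := pow_dvd_pow 2 hn
  have hm4 : m % 4 = 0 := by omega
  have hmge : 4 ≤ m := by
    have := Nat.pow_le_pow_right (by norm_num : 1 ≤ 2) hn
    omega
  refine ⟨fun v => ecc_iff m hm4 hmge v, fun v hv => ecc_le2 m hm4 hmge v hv, ?_⟩
  intro f v hv
  have h3 : ecc m v = 3 := (ecc_iff m hm4 hmge v).2 hv
  have h4 : ecc m (f v) = 3 := by rw [ecc_iso m f v]; exact h3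
  exact (ecc_iff m hm4 hmge (f v)).1 h4
end

section
/- For every natural number n ≥ 2 there exists a finite simple undirected graph Γ on 2^n + 6 vertices whose full automorphism group is isomorphic to the cyclic group ℤ/2^n ℤ. -/
/-- 0-indexed one-directional adjacency. -/
def adj0 (m i j : ℕ) : Prop :=
  (i + 1 < m ∧ j = i+1) ∨ (i = 0 ∧ j = m-1) ∨
  (i = m ∧ j < m ∧ (j%4=0 ∨ j%4=1)) ∨ (i = m+1 ∧ j < m ∧ (j%4=1∨j%4=2)) ∨
  (i = m+2 ∧ j < m ∧ (j%4=2∨j%4=3)) ∨ (i = m+3 ∧ j < m ∧ (j%4=3∨j%4=0)) ∨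
  (i = m+4 ∧ j < m ∧ j%2=0) ∨ (i = m+5 ∧ j < m ∧ j%2=1) ∨
  (i = m ∧ j = m+4) ∨ (i = m+2 ∧ j = m+4) ∨ (i = m+1 ∧ j = m+5) ∨ (i = m+3 ∧ j = m+5)

instance (m i j : ℕ) : Decidable (adj0 m i j) := by unfold adj0; infer_instance

set_option maxHeartbeats 400000 in
lemma rel0_iff (m : ℕ) (hm : 4 ≤ m) (i j : ℕ) : rel0 m (i+1) (j+1) ↔ adj0 m i j := by
  unfold rel0 adj0
  exact or_congr (by omega) (or_congr (by omega) (or_congr (by omega) (or_congr (by omega) (or_congr (by omega) (or_congr (by omega) (or_congr (by omega) (or_congr (by omega) (or_congr (by omega) (or_congr (by omega) (or_congr (by omega) (by omega)))))))))))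

lemma adj_iff (m : ℕ) (hm : 4 ≤ m) (a b : Fin (m+6)) :
    (Gamma m).Adj a b ↔ a.val ≠ b.val ∧ (adj0 m a.val b.val ∨ adj0 m b.val a.val) := by
  show (a ≠ b ∧ _) ↔ _
  rw [rel0_iff m hm, rel0_iff m hm, Ne, Fin.ext_iff]

lemma modcase (m x : ℕ) (hm : 0 < m) (hx : x < 2*m) :
    (x < m ∧ x % m = x) ∨ (m ≤ x ∧ x % m = x - m) := by
  rcases Nat.lt_or_ge x m with h|h
  · exact Or.inl ⟨h, Nat.mod_eq_of_lt h⟩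
  · exact Or.inr ⟨h, by rw [Nat.mod_eq_sub_mod h, Nat.mod_eq_of_lt (by omega)]⟩

/-- value-level description of `gFun`. -/
def gv (m : ℕ) (x : ℕ) : ℕ :=
  if x < m then (x+1)%m else if x < m+3 then x+1 else if x = m+3 then m
  else if x = m+4 then m+5 else m+4

lemma gFun_val (m : ℕ) (x : Fin (m+6)) : (gFun m x).val = gv m x.val := by
  unfold gFun gv; split_ifs <;> rfl

def gInv (m : ℕ) (v : Fin (m+6)) : Fin (m+6) :=
  if h : v.val < m then ⟨(v.val + (m-1)) % m, lt_of_lt_of_le (Nat.mod_lt _ (by omega)) (by omega)⟩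
  else if h2 : v.val = m then ⟨m + 3, by omega⟩
  else if h3 : v.val < m + 4 then ⟨v.val - 1, lt_of_le_of_lt (Nat.sub_le _ _) v.isLt⟩
  else if h4 : v.val = m + 4 then ⟨m + 5, by omega⟩
  else ⟨m + 4, by omega⟩

lemma gInv_val (m : ℕ) (x : Fin (m+6)) : (gInv m x).val =
    (if x.val < m then (x.val + (m-1)) % m else if x.val = m then m+3
     else if x.val < m+4 then x.val - 1 else if x.val = m+4 then m+5 else m+4) := by
  unfold gInv; split_ifs <;> rfl

lemma gv_lt (m : ℕ) (hm : 4 ≤ m) (x : ℕ) (hx : x < m+6) : gv m x < m + 6 := by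
  unfold gv
  have h1 : x < m → (x+1) % m < m := fun h => Nat.mod_lt _ (by omega)
  split_ifs <;> omega

lemma left_inv_g (m : ℕ) (hm : 4 ≤ m) (v : Fin (m+6)) : gInv m (gFun m v) = v := by
  have hv := v.isLt
  apply Fin.ext
  rw [gInv_val, gFun_val]
  unfold gv
  by_cases h1 : v.val < m
  · have hm1 := modcase m (v.val+1) (by omega) (by omega)
    have hm2 := modcase m ((v.val+1)%m + (m-1)) (by omega) (by omega)
    rw [if_pos h1]
    rw [if_pos (by omega : (v.val+1)%m < m)]
    omega
  · rw [if_neg h1]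
    by_cases h2 : v.val < m+3
    · rw [if_pos h2, if_neg (by omega), if_neg (by omega), if_pos (by omega)]; omega
    · rw [if_neg h2]
      by_cases h3 : v.val = m+3
      · rw [if_pos h3, if_neg (by omega), if_pos rfl]; omega
      · rw [if_neg h3]
        by_cases h4 : v.val = m+4
        · rw [if_pos h4, if_neg (by omega), if_neg (by omega), if_neg (by omega),
              if_neg (by omega)]; omega
        · rw [if_neg h4, if_neg (by omega), if_neg (by omega), if_neg (by omega),
              if_pos rfl]; omega

lemma right_inv_g (m : ℕ) (hm : 4 ≤ m) (v : Fin (m+6)) : gFun m (gInv m v) = v := by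
  have hv := v.isLt
  apply Fin.ext
  rw [gFun_val, gInv_val]
  unfold gv
  by_cases h1 : v.val < m
  · have hm1 := modcase m (v.val+(m-1)) (by omega) (by omega)
    have hm2 := modcase m ((v.val+(m-1))%m + 1) (by omega) (by omega)
    rw [if_pos h1, if_pos (by omega : (v.val+(m-1))%m < m)]
    omega
  · rw [if_neg h1]
    by_cases h2 : v.val = m
    · rw [if_pos h2, if_neg (by omega), if_neg (by omega), if_pos rfl]; omega
    · rw [if_neg h2]
      by_cases h3 : v.val < m+4
      · rw [if_pos h3, if_neg (by omega), if_pos (by omega)]; omega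
      · rw [if_neg h3]
        by_cases h4 : v.val = m+4
        · rw [if_pos h4, if_neg (by omega), if_neg (by omega), if_neg (by omega),
              if_neg (by omega)]; omega
        · rw [if_neg h4, if_neg (by omega), if_neg (by omega), if_neg (by omega),
              if_pos rfl]; omega
/-! helper introduction rules for `adj0`, and `gv` evaluation lemmas -/

lemma mkD1 {m i j : ℕ} (h : i+1 < m ∧ j = i+1) : adj0 m i j := Or.inl h
lemma mkD2 {m i j : ℕ} (h : i = 0 ∧ j = m-1) : adj0 m i j := Or.inr (Or.inl h)
lemma mkD3 {m i j : ℕ} (h : i = m ∧ j < m ∧ (j%4=0 ∨ j%4=1)) : adj0 m i j :=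
  Or.inr (Or.inr (Or.inl h))
lemma mkD4 {m i j : ℕ} (h : i = m+1 ∧ j < m ∧ (j%4=1 ∨ j%4=2)) : adj0 m i j :=
  Or.inr (Or.inr (Or.inr (Or.inl h)))
lemma mkD5 {m i j : ℕ} (h : i = m+2 ∧ j < m ∧ (j%4=2 ∨ j%4=3)) : adj0 m i j :=
  Or.inr (Or.inr (Or.inr (Or.inr (Or.inl h))))
lemma mkD6 {m i j : ℕ} (h : i = m+3 ∧ j < m ∧ (j%4=3 ∨ j%4=0)) : adj0 m i j :=
  Or.inr (Or.inr (Or.inr (Or.inr (Or.inr (Or.inl h)))))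
lemma mkD7 {m i j : ℕ} (h : i = m+4 ∧ j < m ∧ j%2=0) : adj0 m i j :=
  Or.inr (Or.inr (Or.inr (Or.inr (Or.inr (Or.inr (Or.inl h))))))
lemma mkD8 {m i j : ℕ} (h : i = m+5 ∧ j < m ∧ j%2=1) : adj0 m i j :=
  Or.inr (Or.inr (Or.inr (Or.inr (Or.inr (Or.inr (Or.inr (Or.inl h)))))))
lemma mkD9 {m i j : ℕ} (h : i = m ∧ j = m+4) : adj0 m i j :=
  Or.inr (Or.inr (Or.inr (Or.inr (Or.inr (Or.inr (Or.inr (Or.inr (Or.inl h))))))))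
lemma mkD10 {m i j : ℕ} (h : i = m+2 ∧ j = m+4) : adj0 m i j :=
  Or.inr (Or.inr (Or.inr (Or.inr (Or.inr (Or.inr (Or.inr (Or.inr (Or.inr (Or.inl h)))))))))
lemma mkD11 {m i j : ℕ} (h : i = m+1 ∧ j = m+5) : adj0 m i j :=
  Or.inr (Or.inr (Or.inr (Or.inr (Or.inr (Or.inr (Or.inr (Or.inr (Or.inr (Or.inr (Or.inl h))))))))))
lemma mkD12 {m i j : ℕ} (h : i = m+3 ∧ j = m+5) : adj0 m i j :=
  Or.inr (Or.inr (Or.inr (Or.inr (Or.inr (Or.inr (Or.inr (Or.inr (Or.inr (Or.inr (Or.inr h))))))))))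

lemma gv_cyc (m x : ℕ) (h : x < m) : gv m x = (x+1) % m := by unfold gv; rw [if_pos h]
lemma gv_0 (m : ℕ) : gv m m = m+1 := by
  unfold gv; rw [if_neg (by omega), if_pos (by omega)]
lemma gv_1 (m : ℕ) : gv m (m+1) = m+2 := by
  unfold gv; rw [if_neg (by omega), if_pos (by omega)]
lemma gv_2 (m : ℕ) : gv m (m+2) = m+3 := by
  unfold gv; rw [if_neg (by omega), if_pos (by omega)]
lemma gv_3 (m : ℕ) : gv m (m+3) = m := by
  unfold gv; rw [if_neg (by omega), if_neg (by omega), if_pos rfl]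
lemma gv_4 (m : ℕ) : gv m (m+4) = m+5 := by
  unfold gv; rw [if_neg (by omega), if_neg (by omega), if_neg (by omega), if_pos rfl]
lemma gv_5 (m : ℕ) : gv m (m+5) = m+4 := by
  unfold gv; rw [if_neg (by omega), if_neg (by omega), if_neg (by omega), if_neg (by omega)]

lemma succ_mod_facts (m : ℕ) (hm : 4 ≤ m) (hm4 : m % 4 = 0) (x : ℕ) (h : x < m) :
    (x+1) % m < m ∧ ((x+1) % m) % 4 = (x+1) % 4 ∧ ((x+1) % m) % 2 = (x+1) % 2
      ∧ ((x+1 < m ∧ (x+1) % m = x+1) ∨ (x+1 = m ∧ (x+1) % m = 0)) := by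
  refine ⟨Nat.mod_lt _ (by omega), Nat.mod_mod_of_dvd _ (by omega),
    Nat.mod_mod_of_dvd _ (by omega), ?_⟩
  have := modcase m (x+1) (by omega) (by omega); omega

lemma adj0_gv (m : ℕ) (hm : 4 ≤ m) (hm4 : m % 4 = 0) (i j : ℕ)
    (h : adj0 m i j) :
    adj0 m (gv m i) (gv m j) ∨ adj0 m (gv m j) (gv m i) := by
  rcases h with ⟨h1,h2⟩|⟨h1,h2⟩|⟨h1,h2,h3⟩|⟨h1,h2,h3⟩|⟨h1,h2,h3⟩|⟨h1,h2,h3⟩|⟨h1,h2,h3⟩|⟨h1,h2,h3⟩|⟨h1,h2⟩|⟨h1,h2⟩|⟨h1,h2⟩|⟨h1,h2⟩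
  · subst h2
    have A := succ_mod_facts m hm hm4 i (by omega)
    have B := succ_mod_facts m hm hm4 (i+1) (by omega)
    rw [gv_cyc m i (by omega), gv_cyc m (i+1) (by omega)]
    by_cases hc : i+2 < m
    · exact Or.inl (mkD1 (by omega))
    · exact Or.inr (mkD2 (by omega))
  · subst h1; subst h2
    have A := succ_mod_facts m hm hm4 0 (by omega)
    have B := succ_mod_facts m hm hm4 (m-1) (by omega)
    rw [gv_cyc m 0 (by omega), gv_cyc m (m-1) (by omega)]
    exact Or.inr (mkD1 (by omega))
  · have B := succ_mod_facts m hm hm4 j h2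
    rw [h1, gv_0, gv_cyc m j h2]
    exact Or.inl (mkD4 (by omega))
  · have B := succ_mod_facts m hm hm4 j h2
    rw [h1, gv_1, gv_cyc m j h2]
    exact Or.inl (mkD5 (by omega))
  · have B := succ_mod_facts m hm hm4 j h2
    rw [h1, gv_2, gv_cyc m j h2]
    exact Or.inl (mkD6 (by omega))
  · have B := succ_mod_facts m hm hm4 j h2
    rw [h1, gv_3, gv_cyc m j h2]
    exact Or.inl (mkD3 (by omega))
  · have B := succ_mod_facts m hm hm4 j h2
    rw [h1, gv_4, gv_cyc m j h2]
    exact Or.inl (mkD8 (by omega))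
  · have B := succ_mod_facts m hm hm4 j h2
    rw [h1, gv_5, gv_cyc m j h2]
    exact Or.inl (mkD7 (by omega))
  · rw [h1, h2, gv_0, gv_4]
    exact Or.inl (mkD11 (by omega))
  · rw [h1, h2, gv_2, gv_4]
    exact Or.inl (mkD12 (by omega))
  · rw [h1, h2, gv_1, gv_5]
    exact Or.inl (mkD10 (by omega))
  · rw [h1, h2, gv_3, gv_5]
    exact Or.inl (mkD9 (by omega))
/-- value-level description of `gInv`. -/
def iv (m : ℕ) (x : ℕ) : ℕ :=
  if x < m then (x+(m-1))%m else if x = m then m+3 else if x < m+4 then x-1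
  else if x = m+4 then m+5 else m+4

lemma gInv_val' (m : ℕ) (x : Fin (m+6)) : (gInv m x).val = iv m x.val := by
  rw [gInv_val]; unfold iv; rfl

lemma iv_cyc (m x : ℕ) (h : x < m) : iv m x = (x+(m-1)) % m := by unfold iv; rw [if_pos h]
lemma iv_0 (m : ℕ) (hm : 4 ≤ m) : iv m m = m+3 := by
  unfold iv; rw [if_neg (by omega), if_pos rfl]
lemma iv_1 (m : ℕ) (hm : 4 ≤ m) : iv m (m+1) = m := by
  unfold iv; rw [if_neg (by omega), if_neg (by omega), if_pos (by omega)]; omega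
lemma iv_2 (m : ℕ) (hm : 4 ≤ m) : iv m (m+2) = m+1 := by
  unfold iv; rw [if_neg (by omega), if_neg (by omega), if_pos (by omega)]; omega
lemma iv_3 (m : ℕ) (hm : 4 ≤ m) : iv m (m+3) = m+2 := by
  unfold iv; rw [if_neg (by omega), if_neg (by omega), if_pos (by omega)]; omega
lemma iv_4 (m : ℕ) (hm : 4 ≤ m) : iv m (m+4) = m+5 := by
  unfold iv; rw [if_neg (by omega), if_neg (by omega), if_neg (by omega), if_pos rfl]
lemma iv_5 (m : ℕ) (hm : 4 ≤ m) : iv m (m+5) = m+4 := by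
  unfold iv; rw [if_neg (by omega), if_neg (by omega), if_neg (by omega), if_neg (by omega)]

lemma pred_mod_facts (m : ℕ) (hm : 4 ≤ m) (hm4 : m % 4 = 0) (x : ℕ) (h : x < m) :
    (x+(m-1)) % m < m ∧ ((x+(m-1)) % m) % 4 = (x+3) % 4 ∧ ((x+(m-1)) % m) % 2 = (x+1) % 2
      ∧ ((0 < x ∧ (x+(m-1)) % m = x-1) ∨ (x = 0 ∧ (x+(m-1)) % m = m-1)) := by
  have h4 : ((x+(m-1)) % m) % 4 = (x+(m-1)) % 4 := Nat.mod_mod_of_dvd _ (by omega)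
  have h2 : ((x+(m-1)) % m) % 2 = (x+(m-1)) % 2 := Nat.mod_mod_of_dvd _ (by omega)
  have := modcase m (x+(m-1)) (by omega) (by omega)
  refine ⟨Nat.mod_lt _ (by omega), ?_, ?_, ?_⟩ <;> omega

lemma adj0_iv (m : ℕ) (hm : 4 ≤ m) (hm4 : m % 4 = 0) (i j : ℕ)
    (h : adj0 m i j) :
    adj0 m (iv m i) (iv m j) ∨ adj0 m (iv m j) (iv m i) := by
  rcases h with ⟨h1,h2⟩|⟨h1,h2⟩|⟨h1,h2,h3⟩|⟨h1,h2,h3⟩|⟨h1,h2,h3⟩|⟨h1,h2,h3⟩|⟨h1,h2,h3⟩|⟨h1,h2,h3⟩|⟨h1,h2⟩|⟨h1,h2⟩|⟨h1,h2⟩|⟨h1,h2⟩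
  · subst h2
    have A := pred_mod_facts m hm hm4 i (by omega)
    have B := pred_mod_facts m hm hm4 (i+1) (by omega)
    rw [iv_cyc m i (by omega), iv_cyc m (i+1) (by omega)]
    by_cases hc : 0 < i
    · exact Or.inl (mkD1 (by omega))
    · exact Or.inr (mkD2 (by omega))
  · subst h1; subst h2
    have A := pred_mod_facts m hm hm4 0 (by omega)
    have B := pred_mod_facts m hm hm4 (m-1) (by omega)
    rw [iv_cyc m 0 (by omega), iv_cyc m (m-1) (by omega)]
    exact Or.inr (mkD1 (by omega))
  · have B := pred_mod_facts m hm hm4 j h2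
    rw [h1, iv_0 m hm, iv_cyc m j h2]
    exact Or.inl (mkD6 (by omega))
  · have B := pred_mod_facts m hm hm4 j h2
    rw [h1, iv_1 m hm, iv_cyc m j h2]
    exact Or.inl (mkD3 (by omega))
  · have B := pred_mod_facts m hm hm4 j h2
    rw [h1, iv_2 m hm, iv_cyc m j h2]
    exact Or.inl (mkD4 (by omega))
  · have B := pred_mod_facts m hm hm4 j h2
    rw [h1, iv_3 m hm, iv_cyc m j h2]
    exact Or.inl (mkD5 (by omega))
  · have B := pred_mod_facts m hm hm4 j h2
    rw [h1, iv_4 m hm, iv_cyc m j h2]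
    exact Or.inl (mkD8 (by omega))
  · have B := pred_mod_facts m hm hm4 j h2
    rw [h1, iv_5 m hm, iv_cyc m j h2]
    exact Or.inl (mkD7 (by omega))
  · rw [h1, h2, iv_0 m hm, iv_4 m hm]
    exact Or.inl (mkD12 (by omega))
  · rw [h1, h2, iv_2 m hm, iv_4 m hm]
    exact Or.inl (mkD11 (by omega))
  · rw [h1, h2, iv_1 m hm, iv_5 m hm]
    exact Or.inl (mkD9 (by omega))
  · rw [h1, h2, iv_3 m hm, iv_5 m hm]
    exact Or.inl (mkD10 (by omega))

lemma gFun_adj (m : ℕ) (hm : 4 ≤ m) (hm4 : m % 4 = 0) (a b : Fin (m+6))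
    (h : (Gamma m).Adj a b) : (Gamma m).Adj (gFun m a) (gFun m b) := by
  rw [adj_iff m hm] at h ⊢
  refine ⟨?_, ?_⟩
  · intro e
    have e2 : gFun m a = gFun m b := Fin.ext e
    have : a = b := by
      rw [← left_inv_g m hm a, ← left_inv_g m hm b, e2]
    exact h.1 (congrArg Fin.val this)
  · rw [gFun_val, gFun_val]
    rcases h.2 with h'|h'
    · exact adj0_gv m hm hm4 _ _ h'
    · exact Or.symm (adj0_gv m hm hm4 _ _ h')

lemma gInv_adj (m : ℕ) (hm : 4 ≤ m) (hm4 : m % 4 = 0) (a b : Fin (m+6))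
    (h : (Gamma m).Adj a b) : (Gamma m).Adj (gInv m a) (gInv m b) := by
  rw [adj_iff m hm] at h ⊢
  refine ⟨?_, ?_⟩
  · intro e
    have e2 : gInv m a = gInv m b := Fin.ext e
    have : a = b := by
      rw [← right_inv_g m hm a, ← right_inv_g m hm b, e2]
    exact h.1 (congrArg Fin.val this)
  · rw [gInv_val', gInv_val']
    rcases h.2 with h'|h'
    · exact adj0_iv m hm hm4 _ _ h'
    · exact Or.symm (adj0_iv m hm hm4 _ _ h')

def gIso (m : ℕ) (hm : 4 ≤ m) (hm4 : m % 4 = 0) : Gamma m ≃g Gamma m where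
  toFun := gFun m
  invFun := gInv m
  left_inv := left_inv_g m hm
  right_inv := right_inv_g m hm
  map_rel_iff' := by
    intro a b
    constructor
    · intro h
      have h' : (Gamma m).Adj (gFun m a) (gFun m b) := h
      have h2 := gInv_adj m hm hm4 _ _ h'
      rwa [show gInv m (gFun m a) = a from left_inv_g m hm a,
           show gInv m (gFun m b) = b from left_inv_g m hm b] at h2
    · exact gFun_adj m hm hm4 a b

lemma gIso_apply_val (m : ℕ) (hm : 4 ≤ m) (hm4 : m % 4 = 0) (v : Fin (m+6)) :
    ((gIso m hm hm4) v).val = gv m v.val := gFun_val m v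

/-- value-level description of powers of `g`. -/
def pw (m k x : ℕ) : ℕ :=
  if x < m then (x+k)%m else if x < m+4 then m+(x-m+k)%4 else m+4+(x-(m+4)+k)%2

lemma pw_zero (m x : ℕ) (hm : 4 ≤ m) (hx : x < m+6) : pw m 0 x = x := by
  unfold pw
  split_ifs with h1 h2
  · exact Nat.mod_eq_of_lt h1
  · omega
  · omega

lemma pw_gv (m : ℕ) (hm : 4 ≤ m) (hm4 : m % 4 = 0) (k x : ℕ) (hx : x < m+6) :
    pw m k (gv m x) = pw m (k+1) x := by
  by_cases h1 : x < m
  · rw [gv_cyc m x h1]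
    have hlt : (x+1) % m < m := Nat.mod_lt _ (by omega)
    unfold pw
    rw [if_pos hlt, if_pos h1, Nat.mod_add_mod]
    have : x + 1 + k = x + (k+1) := by omega
    rw [this]
  · by_cases h2 : x < m+3
    · have hx' : x = m ∨ x = m+1 ∨ x = m+2 := by omega
      have hgv : gv m x = x + 1 := by
        rcases hx' with h|h|h <;> rw [h] <;> [exact gv_0 m; exact gv_1 m; exact gv_2 m]
      rw [hgv]
      unfold pw
      rw [if_neg (by omega), if_pos (by omega), if_neg (by omega), if_pos (by omega)]
      omega
    · by_cases h3 : x = m+3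
      · rw [h3, gv_3]
        unfold pw
        rw [if_neg (by omega), if_pos (by omega), if_neg (by omega), if_pos (by omega)]
        omega
      · by_cases h4 : x = m+4
        · rw [h4, gv_4]
          unfold pw
          rw [if_neg (by omega), if_neg (by omega), if_neg (by omega), if_neg (by omega)]
          omega
        · have h5 : x = m+5 := by omega
          rw [h5, gv_5]
          unfold pw
          rw [if_neg (by omega), if_neg (by omega), if_neg (by omega), if_neg (by omega)]
          omega

lemma gIso_pow_val (m : ℕ) (hm : 4 ≤ m) (hm4 : m % 4 = 0) (k : ℕ) (v : Fin (m+6)) :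
    (((gIso m hm hm4)^k) v).val = pw m k v.val := by
  induction k generalizing v with
  | zero =>
    simp only [pow_zero]
    rw [pw_zero m v.val hm v.isLt]
    rfl
  | succ k ih =>
    rw [pow_succ]
    have : ((gIso m hm hm4 ^ k * gIso m hm hm4) v) = (gIso m hm hm4 ^ k) ((gIso m hm hm4) v) := rfl
    rw [this, ih, gIso_apply_val, pw_gv m hm hm4 k v.val v.isLt]
/-! ### Neighborhood characterizations -/

lemma adjC (m : ℕ) (hm : 4 ≤ m) (v w : Fin (m+6)) (hv : v.val < m) :
    (Gamma m).Adj v w ↔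
      ((w.val < m ∧ ((v.val+1 < m ∧ w.val = v.val+1) ∨ (w.val+1 < m ∧ v.val = w.val+1)
          ∨ (v.val = 0 ∧ w.val = m-1) ∨ (w.val = 0 ∧ v.val = m-1)))
        ∨ w.val = m + v.val%4 ∨ w.val = m + (v.val%4+3)%4 ∨ w.val = m+4+v.val%2) := by
  rw [adj_iff m hm]
  constructor
  · rintro ⟨hne, h|h⟩ <;>
      rcases h with ⟨h1,h2⟩|⟨h1,h2⟩|⟨h1,h2,h3⟩|⟨h1,h2,h3⟩|⟨h1,h2,h3⟩|⟨h1,h2,h3⟩|⟨h1,h2,h3⟩|⟨h1,h2,h3⟩|⟨h1,h2⟩|⟨h1,h2⟩|⟨h1,h2⟩|⟨h1,h2⟩ <;>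
      omega
  · rintro (⟨hw, h|h|h|h⟩|h|h|h)
    · exact ⟨by omega, Or.inl (mkD1 (by omega))⟩
    · exact ⟨by omega, Or.inr (mkD1 (by omega))⟩
    · exact ⟨by omega, Or.inl (mkD2 (by omega))⟩
    · exact ⟨by omega, Or.inr (mkD2 (by omega))⟩
    · -- w = m + v%4 : w is X_{v%4}, v in its class
      refine ⟨by omega, Or.inr ?_⟩
      have h4 : v.val % 4 = 0 ∨ v.val % 4 = 1 ∨ v.val % 4 = 2 ∨ v.val % 4 = 3 := by omega
      rcases h4 with h4|h4|h4|h4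
      · exact mkD3 (by omega)
      · exact mkD4 (by omega)
      · exact mkD5 (by omega)
      · exact mkD6 (by omega)
    · refine ⟨by omega, Or.inr ?_⟩
      have h4 : v.val % 4 = 0 ∨ v.val % 4 = 1 ∨ v.val % 4 = 2 ∨ v.val % 4 = 3 := by omega
      rcases h4 with h4|h4|h4|h4
      · exact mkD6 (by omega)
      · exact mkD3 (by omega)
      · exact mkD4 (by omega)
      · exact mkD5 (by omega)
    · refine ⟨by omega, Or.inr ?_⟩
      have h2 : v.val % 2 = 0 ∨ v.val % 2 = 1 := by omega
      rcases h2 with h2|h2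
      · exact mkD7 (by omega)
      · exact mkD8 (by omega)

lemma adjX (m : ℕ) (hm : 4 ≤ m) (r : ℕ) (hr : r < 4) (v w : Fin (m+6)) (hv : v.val = m+r) :
    (Gamma m).Adj v w ↔
      ((w.val < m ∧ (w.val%4 = r ∨ w.val%4 = (r+1)%4)) ∨ w.val = m+4+r%2) := by
  rw [adj_iff m hm]
  constructor
  · rintro ⟨hne, h|h⟩ <;>
      rcases h with ⟨h1,h2⟩|⟨h1,h2⟩|⟨h1,h2,h3⟩|⟨h1,h2,h3⟩|⟨h1,h2,h3⟩|⟨h1,h2,h3⟩|⟨h1,h2,h3⟩|⟨h1,h2,h3⟩|⟨h1,h2⟩|⟨h1,h2⟩|⟨h1,h2⟩|⟨h1,h2⟩ <;>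
      omega
  · rintro (⟨hw, h⟩|h)
    · refine ⟨by omega, Or.inl ?_⟩
      have h4 : r = 0 ∨ r = 1 ∨ r = 2 ∨ r = 3 := by omega
      rcases h4 with h4|h4|h4|h4
      · exact mkD3 (by omega)
      · exact mkD4 (by omega)
      · exact mkD5 (by omega)
      · exact mkD6 (by omega)
    · refine ⟨by omega, Or.inl ?_⟩
      have h4 : r = 0 ∨ r = 1 ∨ r = 2 ∨ r = 3 := by omega
      rcases h4 with h4|h4|h4|h4
      · exact mkD9 (by omega)
      · exact mkD11 (by omega)
      · exact mkD10 (by omega)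
      · exact mkD12 (by omega)

lemma adjP (m : ℕ) (hm : 4 ≤ m) (t : ℕ) (ht : t < 2) (v w : Fin (m+6)) (hv : v.val = m+4+t) :
    (Gamma m).Adj v w ↔
      ((w.val < m ∧ w.val%2 = t) ∨ w.val = m+t ∨ w.val = m+2+t) := by
  rw [adj_iff m hm]
  constructor
  · rintro ⟨hne, h|h⟩ <;>
      rcases h with ⟨h1,h2⟩|⟨h1,h2⟩|⟨h1,h2,h3⟩|⟨h1,h2,h3⟩|⟨h1,h2,h3⟩|⟨h1,h2,h3⟩|⟨h1,h2,h3⟩|⟨h1,h2,h3⟩|⟨h1,h2⟩|⟨h1,h2⟩|⟨h1,h2⟩|⟨h1,h2⟩ <;>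
      omega
  · rintro (⟨hw, h⟩|h|h)
    · have h2 : t = 0 ∨ t = 1 := by omega
      rcases h2 with h2|h2
      · exact ⟨by omega, Or.inl (mkD7 (by omega))⟩
      · exact ⟨by omega, Or.inl (mkD8 (by omega))⟩
    · have h2 : t = 0 ∨ t = 1 := by omega
      rcases h2 with h2|h2
      · exact ⟨by omega, Or.inr (mkD9 (by omega))⟩
      · exact ⟨by omega, Or.inr (mkD11 (by omega))⟩
    · have h2 : t = 0 ∨ t = 1 := by omega
      rcases h2 with h2|h2
      · exact ⟨by omega, Or.inr (mkD10 (by omega))⟩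
      · exact ⟨by omega, Or.inr (mkD12 (by omega))⟩
/-! ### Counting lemmas -/

open Finset in
lemma filter_range_succ (n : ℕ) (q : ℕ → Prop) [DecidablePred q] :
    ((range (n+1)).filter q).card = ((range n).filter q).card + (if q n then 1 else 0) := by
  rw [Finset.range_add_one, Finset.filter_insert]
  split_ifs
  · rw [Finset.card_insert_of_notMem (by simp)]
  · omega

open Finset in
lemma count4 (k r : ℕ) (hr : r < 4) :
    ((range (4*k)).filter (fun j => j % 4 = r)).card = k := by
  induction k with
  | zero => simp
  | succ k ih =>
    rw [show 4*(k+1) = 4*k+1+1+1+1 by ring, filter_range_succ, filter_range_succ,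
        filter_range_succ, filter_range_succ, ih]
    split_ifs <;> omega

open Finset in
lemma count2 (k t : ℕ) (ht : t < 2) :
    ((range (4*k)).filter (fun j => j % 2 = t)).card = 2*k := by
  induction k with
  | zero => simp
  | succ k ih =>
    rw [show 4*(k+1) = 4*k+1+1+1+1 by ring, filter_range_succ, filter_range_succ,
        filter_range_succ, filter_range_succ, ih]
    split_ifs <;> omega

open Finset in
lemma count_mod4 (m r : ℕ) (hm4 : m % 4 = 0) (hr : r < 4) :
    ((range m).filter (fun j => j % 4 = r)).card = m/4 := by
  have h : range m = range (4*(m/4)) := by rw [show 4*(m/4) = m by omega]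
  rw [h, count4 _ r hr]

open Finset in
lemma count_mod2 (m t : ℕ) (hm4 : m % 4 = 0) (ht : t < 2) :
    ((range m).filter (fun j => j % 2 = t)).card = m/2 := by
  have h : range m = range (4*(m/4)) := by rw [show 4*(m/4) = m by omega]
  rw [h, count2 _ t ht]; omega

open Finset in
lemma count_mod4_pair (m r s : ℕ) (hm4 : m % 4 = 0) (hr : r < 4) (hs : s < 4) (hrs : r ≠ s) :
    ((range m).filter (fun j => j % 4 = r ∨ j % 4 = s)).card = m/4 + m/4 := by
  rw [Finset.filter_or, Finset.card_union_of_disjoint, count_mod4 m r hm4 hr, count_mod4 m s hm4 hs]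
  rw [Finset.disjoint_left]
  intro a ha hb
  simp only [Finset.mem_filter] at ha hb
  omega

open Finset in
lemma card_filter_fin (N : ℕ) (p : Fin N → Prop) [DecidablePred p] (q : ℕ → Prop)
    [DecidablePred q] (h : ∀ i : Fin N, p i ↔ q i.val) :
    (Finset.univ.filter p).card = ((Finset.range N).filter q).card := by
  apply Finset.card_bij (fun (a : Fin N) _ => a.val)
  · intro a ha
    simp only [Finset.mem_filter, Finset.mem_univ, true_and] at ha
    simp only [Finset.mem_filter, Finset.mem_range]
    exact ⟨a.isLt, (h a).1 ha⟩
  · intro a _ b _ hab; exact Fin.ext hab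
  · intro b hb
    simp only [Finset.mem_filter, Finset.mem_range] at hb
    refine ⟨⟨b, hb.1⟩, ?_, rfl⟩
    simp only [Finset.mem_filter, Finset.mem_univ, true_and]
    exact (h ⟨b, hb.1⟩).2 hb.2

open Finset in
lemma peel6 (m : ℕ) (q : ℕ → Prop) [DecidablePred q] :
    ((range (m+6)).filter q).card = ((range m).filter q).card
      + (if q m then 1 else 0) + (if q (m+1) then 1 else 0) + (if q (m+2) then 1 else 0)
      + (if q (m+3) then 1 else 0) + (if q (m+4) then 1 else 0) + (if q (m+5) then 1 else 0) := by
  rw [show m+6 = m+1+1+1+1+1+1 by ring, filter_range_succ, filter_range_succ, filter_range_succ,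
      filter_range_succ, filter_range_succ, filter_range_succ]

/-- The degree of a gadget vertex `X_r`. -/
lemma degX (m : ℕ) (hm : 4 ≤ m) (hm4 : m % 4 = 0) (r : ℕ) (hr : r < 4) (v : Fin (m+6))
    (hv : v.val = m+r) : (Gamma m).degree v = m/2 + 1 := by
  rw [SimpleGraph.degree, SimpleGraph.neighborFinset_eq_filter]
  rw [card_filter_fin _ _ (fun j => (j < m ∧ (j%4 = r ∨ j%4 = (r+1)%4)) ∨ j = m+4+r%2)
      (fun w => by rw [adjX m hm r hr v w hv])]
  rw [peel6]
  rw [Finset.filter_congr (fun x hx => by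
    simp only [Finset.mem_range] at hx
    constructor
    · rintro (⟨h1,h2⟩|h); exact h2; omega
    · intro h; exact Or.inl ⟨hx, h⟩ : ∀ x ∈ Finset.range m,
        ((x < m ∧ (x%4 = r ∨ x%4 = (r+1)%4)) ∨ x = m+4+r%2) ↔ (x%4 = r ∨ x%4 = (r+1)%4))]
  rw [count_mod4_pair m r ((r+1)%4) hm4 hr (by omega) (by omega)]
  split_ifs <;> omega

/-- The degree of a gadget vertex `P_t`. -/
lemma degP (m : ℕ) (hm : 4 ≤ m) (hm4 : m % 4 = 0) (t : ℕ) (ht : t < 2) (v : Fin (m+6))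
    (hv : v.val = m+4+t) : (Gamma m).degree v = m/2 + 2 := by
  rw [SimpleGraph.degree, SimpleGraph.neighborFinset_eq_filter]
  rw [card_filter_fin _ _ (fun j => (j < m ∧ j%2 = t) ∨ j = m+t ∨ j = m+2+t)
      (fun w => by rw [adjP m hm t ht v w hv])]
  rw [peel6]
  rw [Finset.filter_congr (fun x hx => by
    simp only [Finset.mem_range] at hx
    constructor
    · rintro (⟨h1,h2⟩|h); exact h2; omega
    · intro h; exact Or.inl ⟨hx, h⟩ : ∀ x ∈ Finset.range m,
        ((x < m ∧ x%2 = t) ∨ x = m+t ∨ x = m+2+t) ↔ (x%2 = t))]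
  rw [count_mod2 m t hm4 ht]
  split_ifs <;> omega
set_option maxHeartbeats 1600000 in
/-- The degree of a cycle vertex is 5. -/
lemma degC (m : ℕ) (hm : 4 ≤ m) (hm4 : m % 4 = 0) (v : Fin (m+6))
    (hv : v.val < m) : (Gamma m).degree v = 5 := by
  rw [SimpleGraph.degree, SimpleGraph.neighborFinset_eq_filter]
  rw [card_filter_fin _ _ (fun j =>
      (j < m ∧ ((v.val+1 < m ∧ j = v.val+1) ∨ (j+1 < m ∧ v.val = j+1)
        ∨ (v.val = 0 ∧ j = m-1) ∨ (j = 0 ∧ v.val = m-1)))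
      ∨ j = m + v.val%4 ∨ j = m + (v.val%4+3)%4 ∨ j = m+4+v.val%2)
      (fun w => by rw [adjC m hm v w hv])]
  have hset : (Finset.range (m+6)).filter (fun j =>
      (j < m ∧ ((v.val+1 < m ∧ j = v.val+1) ∨ (j+1 < m ∧ v.val = j+1)
        ∨ (v.val = 0 ∧ j = m-1) ∨ (j = 0 ∧ v.val = m-1)))
      ∨ j = m + v.val%4 ∨ j = m + (v.val%4+3)%4 ∨ j = m+4+v.val%2) =
      insert (if v.val+1 < m then v.val+1 else 0)
        (insert (if v.val = 0 then m-1 else v.val-1)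
          (insert (m + v.val%4) (insert (m + (v.val%4+3)%4) {m+4+v.val%2}))) := by
    ext x
    simp only [Finset.mem_filter, Finset.mem_range, Finset.mem_insert, Finset.mem_singleton]
    constructor
    · rintro ⟨hx, ⟨_, h|h|h|h⟩|h|h|h⟩ <;> split_ifs <;> omega
    · intro h
      rcases h with h|h|h|h|h
      · refine ⟨by split_ifs at h <;> omega, Or.inl ⟨by split_ifs at h <;> omega, ?_⟩⟩
        split_ifs at h with hc
        · exact Or.inl ⟨hc, h⟩
        · exact Or.inr (Or.inr (Or.inr ⟨h, by omega⟩))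
      · refine ⟨by split_ifs at h <;> omega, Or.inl ⟨by split_ifs at h <;> omega, ?_⟩⟩
        split_ifs at h with hc
        · exact Or.inr (Or.inr (Or.inl ⟨hc, h⟩))
        · exact Or.inr (Or.inl ⟨by omega, by omega⟩)
      · exact ⟨by omega, Or.inr (Or.inl h)⟩
      · exact ⟨by omega, Or.inr (Or.inr (Or.inl h))⟩
      · exact ⟨by omega, Or.inr (Or.inr (Or.inr h))⟩
  rw [hset]
  rw [Finset.card_insert_of_notMem (by
        simp only [Finset.mem_insert, Finset.mem_singleton]
        push_neg
        refine ⟨?_, ?_, ?_, ?_⟩ <;> split_ifs <;> omega),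
      Finset.card_insert_of_notMem (by
        simp only [Finset.mem_insert, Finset.mem_singleton]
        push_neg
        refine ⟨?_, ?_, ?_⟩ <;> split_ifs <;> omega),
      Finset.card_insert_of_notMem (by
        simp only [Finset.mem_insert, Finset.mem_singleton]
        push_neg
        refine ⟨?_, ?_⟩ <;> omega),
      Finset.card_insert_of_notMem (by
        simp only [Finset.mem_singleton]
        omega),
      Finset.card_singleton]
/-- common neighbours finset -/
def cns (m : ℕ) (v u : Fin (m+6)) : Finset (Fin (m+6)) :=
  Finset.univ.filter (fun w => (Gamma m).Adj v w ∧ (Gamma m).Adj u w)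

set_option maxHeartbeats 800000 in
lemma cnXP (m : ℕ) (hm : 4 ≤ m) (hm4 : m % 4 = 0) (r : ℕ) (hr : r < 4)
    (v u : Fin (m+6)) (hv : v.val = m+r) (hu : u.val = m+4+r%2) :
    (cns m v u).card = m/4 := by
  unfold cns
  rw [card_filter_fin _ _ (fun j => j < m ∧ j%4 = r) (fun w => by
    rw [adjX m hm r hr v w hv, adjP m hm (r%2) (by omega) u w hu]
    omega)]
  rw [peel6]
  rw [Finset.filter_congr (fun x hx => by
    simp only [Finset.mem_range] at hx
    constructor
    · rintro ⟨_, h⟩; exact h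
    · intro h; exact ⟨hx, h⟩ : ∀ x ∈ Finset.range m,
        (x < m ∧ x%4 = r) ↔ (x%4 = r))]
  rw [count_mod4 m r hm4 hr]
  split_ifs <;> omega

set_option maxHeartbeats 800000 in
lemma cnCP (m : ℕ) (hm : 4 ≤ m) (hm4 : m % 4 = 0)
    (v u : Fin (m+6)) (hv : v.val < m) (hu : u.val = m+4+v.val%2) :
    (cns m v u).card = 1 := by
  unfold cns
  rw [card_filter_fin _ _ (fun j => j = m + v.val%4) (fun w => by
    rw [adjC m hm v w hv, adjP m hm (v.val%2) (by omega) u w hu]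
    omega)]
  rw [peel6]
  rw [Finset.filter_congr (fun x hx => by
    simp only [Finset.mem_range] at hx
    constructor
    · intro h; omega
    · intro h; exact absurd h (by simp) : ∀ x ∈ Finset.range m,
        (x = m + v.val%4) ↔ False)]
  rw [Finset.filter_false]
  simp only [Finset.card_empty]
  split_ifs <;> omega

lemma iso_degree (m : ℕ) (φ : Gamma m ≃g Gamma m) (v : Fin (m+6)) :
    (Gamma m).degree (φ v) = (Gamma m).degree v := by
  rw [SimpleGraph.degree, SimpleGraph.degree, SimpleGraph.neighborFinset_eq_filter,
    SimpleGraph.neighborFinset_eq_filter]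
  symm
  apply Finset.card_bij (fun w _ => φ w)
  · intro a ha
    simp only [Finset.mem_filter, Finset.mem_univ, true_and] at *
    exact φ.map_adj_iff.2 ha
  · intro a _ b _ hab; exact φ.injective hab
  · intro b hb
    simp only [Finset.mem_filter, Finset.mem_univ, true_and] at *
    refine ⟨φ.symm b, ?_, φ.apply_symm_apply b⟩
    rw [← φ.map_adj_iff, φ.apply_symm_apply]
    exact hb

lemma iso_cns (m : ℕ) (φ : Gamma m ≃g Gamma m) (v u : Fin (m+6)) :
    (cns m (φ v) (φ u)).card = (cns m v u).card := by
  unfold cns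
  symm
  apply Finset.card_bij (fun w _ => φ w)
  · intro a ha
    simp only [Finset.mem_filter, Finset.mem_univ, true_and] at *
    exact ⟨φ.map_adj_iff.2 ha.1, φ.map_adj_iff.2 ha.2⟩
  · intro a _ b _ hab; exact φ.injective hab
  · intro b hb
    simp only [Finset.mem_filter, Finset.mem_univ, true_and] at *
    refine ⟨φ.symm b, ?_, φ.apply_symm_apply b⟩
    constructor <;> rw [← φ.map_adj_iff, φ.apply_symm_apply]
    exacts [hb.1, hb.2]
def isP (m : ℕ) (v : Fin (m+6)) : Prop := (Gamma m).degree v = m/2+2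

def isX (m : ℕ) (v : Fin (m+6)) : Prop :=
  (Gamma m).degree v = m/2+1 ∧
    ∃ u, (Gamma m).Adj v u ∧ (Gamma m).degree u = m/2+2 ∧ (cns m v u).card = m/4

lemma deg_cases (m : ℕ) (hm : 4 ≤ m) (hm4 : m % 4 = 0) (v : Fin (m+6)) :
    (v.val < m ∧ (Gamma m).degree v = 5) ∨
    (m ≤ v.val ∧ v.val < m+4 ∧ (Gamma m).degree v = m/2+1) ∨
    (m+4 ≤ v.val ∧ (Gamma m).degree v = m/2+2) := by
  have hlt := v.isLt
  by_cases h1 : v.val < m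
  · exact Or.inl ⟨h1, degC m hm hm4 v h1⟩
  · by_cases h2 : v.val < m+4
    · exact Or.inr (Or.inl ⟨by omega, h2, degX m hm hm4 (v.val-m) (by omega) v (by omega)⟩)
    · exact Or.inr (Or.inr ⟨by omega, degP m hm hm4 (v.val-(m+4)) (by omega) v (by omega)⟩)

lemma classP (m : ℕ) (hm : 4 ≤ m) (hm4 : m % 4 = 0) (v : Fin (m+6)) :
    isP m v ↔ m+4 ≤ v.val := by
  unfold isP
  rcases deg_cases m hm hm4 v with ⟨h1,h2⟩|⟨h1,h2,h3⟩|⟨h1,h2⟩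
  · rw [h2]; omega
  · rw [h3]; omega
  · rw [h2]; omega

lemma classX (m : ℕ) (hm : 4 ≤ m) (hm4 : m % 4 = 0) (v : Fin (m+6)) :
    isX m v ↔ m ≤ v.val ∧ v.val < m+4 := by
  constructor
  · rintro ⟨hdeg, u, hadj, hdegu, hcn⟩
    rcases deg_cases m hm hm4 v with ⟨h1,h2⟩|⟨h1,h2,h3⟩|⟨h1,h2⟩
    · -- cycle vertex: forces m = 8, then the common-neighbour count gives a contradiction
      exfalso
      have hm8 : m = 8 := by omega
      have hu : m+4 ≤ u.val := (classP m hm hm4 u).1 hdegu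
      have hu2 : u.val = m+4+v.val%2 := by
        rw [adjC m hm v u h1] at hadj
        omega
      have := cnCP m hm hm4 v u h1 hu2
      omega
    · exact ⟨h1, h2⟩
    · omega
  · rintro ⟨h1, h2⟩
    set r := v.val - m with hr
    have hvr : v.val = m + r := by omega
    have hr4 : r < 4 := by omega
    refine ⟨degX m hm hm4 r hr4 v hvr, ⟨m+4+r%2, by omega⟩, ?_, ?_, ?_⟩
    · rw [adjX m hm r hr4 v _ hvr]
      exact Or.inr rfl
    · exact degP m hm hm4 (r%2) (by omega) _ rfl
    · exact cnXP m hm hm4 r hr4 v _ hvr rfl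

lemma isP_pres (m : ℕ) (φ : Gamma m ≃g Gamma m) (v : Fin (m+6)) (h : isP m v) : isP m (φ v) := by
  unfold isP at *
  rw [iso_degree m φ v]; exact h

lemma isX_pres (m : ℕ) (φ : Gamma m ≃g Gamma m) (v : Fin (m+6)) (h : isX m v) : isX m (φ v) := by
  obtain ⟨hdeg, u, hadj, hdegu, hcn⟩ := h
  refine ⟨by rw [iso_degree m φ v]; exact hdeg, φ u, φ.map_adj_iff.2 hadj,
    by rw [iso_degree m φ u]; exact hdegu, by rw [iso_cns m φ v u]; exact hcn⟩

lemma phi_P (m : ℕ) (hm : 4 ≤ m) (hm4 : m % 4 = 0) (φ : Gamma m ≃g Gamma m) (v : Fin (m+6))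
    (h : m+4 ≤ v.val) : m+4 ≤ (φ v).val :=
  (classP m hm hm4 (φ v)).1 (isP_pres m φ v ((classP m hm hm4 v).2 h))

lemma phi_X (m : ℕ) (hm : 4 ≤ m) (hm4 : m % 4 = 0) (φ : Gamma m ≃g Gamma m) (v : Fin (m+6))
    (h1 : m ≤ v.val) (h2 : v.val < m+4) : m ≤ (φ v).val ∧ (φ v).val < m+4 :=
  (classX m hm hm4 (φ v)).1 (isX_pres m φ v ((classX m hm hm4 v).2 ⟨h1, h2⟩))

lemma phi_C (m : ℕ) (hm : 4 ≤ m) (hm4 : m % 4 = 0) (φ : Gamma m ≃g Gamma m) (v : Fin (m+6))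
    (h : v.val < m) : (φ v).val < m := by
  by_contra hc
  push_neg at hc
  by_cases h4 : m+4 ≤ (φ v).val
  · have := isP_pres m φ.symm (φ v) ((classP m hm hm4 (φ v)).2 h4)
    rw [φ.symm_apply_apply] at this
    have := (classP m hm hm4 v).1 this
    omega
  · have := isX_pres m φ.symm (φ v) ((classX m hm hm4 (φ v)).2 ⟨hc, by omega⟩)
    rw [φ.symm_apply_apply] at this
    have := (classX m hm hm4 v).1 this
    omega
/-- cycle adjacency, value level -/
def cyc (m i j : ℕ) : Prop :=
  (i+1 < m ∧ j=i+1) ∨ (j+1 < m ∧ i=j+1) ∨ (i=0∧j=m-1) ∨ (j=0∧i=m-1)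

lemma cyc_adj (m : ℕ) (hm : 4 ≤ m) (v w : Fin (m+6)) (hv : v.val < m) (hw : w.val < m) :
    (Gamma m).Adj v w ↔ cyc m v.val w.val := by
  rw [adjC m hm v w hv]; unfold cyc
  constructor
  · rintro (⟨h1, h⟩|h|h|h) <;> omega
  · intro h; exact Or.inl ⟨hw, by omega⟩

lemma cyc_walk (m k : ℕ) (hm : 4 ≤ m) (f : ℕ → ℕ) (hk : k < m)
    (hfC : ∀ i, i < m → f i < m)
    (hfadj : ∀ i j, i < m → j < m → cyc m i j → cyc m (f i) (f j))
    (hfinj : ∀ i j, i < m → j < m → f i = f j → i = j)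
    (hf0 : f 0 = k) (hf1 : f 1 = (k+1)%m) :
    ∀ i, i < m → f i = (k+i)%m := by
  have main : ∀ i, i+1 < m → f i = (k+i)%m ∧ f (i+1) = (k+(i+1))%m := by
    intro i
    induction i with
    | zero =>
      intro h
      constructor
      · rw [hf0, Nat.add_zero, Nat.mod_eq_of_lt hk]
      · rw [hf1]
    | succ n ih =>
      intro h
      have p := ih (by omega)
      refine ⟨p.2, ?_⟩
      have hadj := hfadj (n+1) (n+1+1) (by omega) (by omega) (by unfold cyc; omega)
      have hne : f (n+1+1) ≠ f n := fun e => by have := hfinj _ _ (by omega) (by omega) e; omega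
      have b2 := hfC (n+1+1) (by omega)
      have mc0 := modcase m (k+n) (by omega) (by omega)
      have mc1 := modcase m (k+(n+1)) (by omega) (by omega)
      have mc2 := modcase m (k+(n+1+1)) (by omega) (by omega)
      rw [p.2] at hadj
      rw [p.1] at hne
      unfold cyc at hadj
      omega
  intro i hi
  rcases Nat.eq_zero_or_pos i with rfl|hpos
  · rw [hf0, Nat.add_zero, Nat.mod_eq_of_lt hk]
  · have := (main (i-1) (by omega)).2
    rwa [show i-1+1 = i by omega] at this

lemma cyc_walk' (m k : ℕ) (hm : 4 ≤ m) (f : ℕ → ℕ) (hk : k < m)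
    (hfC : ∀ i, i < m → f i < m)
    (hfadj : ∀ i j, i < m → j < m → cyc m i j → cyc m (f i) (f j))
    (hfinj : ∀ i j, i < m → j < m → f i = f j → i = j)
    (hf0 : f 0 = k) (hf1 : f 1 = (k+(m-1))%m) :
    ∀ i, i < m → f i = (k+(m-i))%m := by
  have main : ∀ i, i+1 < m → f i = (k+(m-i))%m ∧ f (i+1) = (k+(m-(i+1)))%m := by
    intro i
    induction i with
    | zero =>
      intro h
      constructor
      · rw [hf0, Nat.sub_zero, Nat.add_mod_right, Nat.mod_eq_of_lt hk]
      · rw [hf1]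
    | succ n ih =>
      intro h
      have p := ih (by omega)
      refine ⟨p.2, ?_⟩
      have hadj := hfadj (n+1) (n+1+1) (by omega) (by omega) (by unfold cyc; omega)
      have hne : f (n+1+1) ≠ f n := fun e => by have := hfinj _ _ (by omega) (by omega) e; omega
      have b2 := hfC (n+1+1) (by omega)
      have mc0 := modcase m (k+(m-n)) (by omega) (by omega)
      have mc1 := modcase m (k+(m-(n+1))) (by omega) (by omega)
      have mc2 := modcase m (k+(m-(n+1+1))) (by omega) (by omega)
      rw [p.2] at hadj
      rw [p.1] at hne
      unfold cyc at hadj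
      omega
  intro i hi
  rcases Nat.eq_zero_or_pos i with rfl|hpos
  · rw [hf0, Nat.sub_zero, Nat.add_mod_right, Nat.mod_eq_of_lt hk]
  · have := (main (i-1) (by omega)).2
    rwa [show i-1+1 = i by omega] at this
lemma pwC (m k x : ℕ) (h : x < m) : pw m k x = (x+k)%m := by unfold pw; rw [if_pos h]
lemma pwX (m k r : ℕ) (hm : 4 ≤ m) (hr : r < 4) : pw m k (m+r) = m+(r+k)%4 := by
  unfold pw; rw [if_neg (by omega), if_pos (by omega)]
  have : m+r-m+k = r+k := by omega
  rw [this]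
lemma pwP (m k t : ℕ) (hm : 4 ≤ m) (ht : t < 2) : pw m k (m+4+t) = m+4+(t+k)%2 := by
  unfold pw; rw [if_neg (by omega), if_neg (by omega)]
  have : m+4+t-(m+4)+k = t+k := by omega
  rw [this]

set_option maxHeartbeats 1600000 in
lemma rigid (m : ℕ) (hm : 4 ≤ m) (hm4 : m % 4 = 0) (φ : Gamma m ≃g Gamma m) :
    ∃ k, k < m ∧ ∀ v, φ v = ((gIso m hm hm4)^k) v := by
  have hm6 : 0 < m+6 := by omega
  set f : ℕ → ℕ := fun i => (φ ⟨i % (m+6), Nat.mod_lt _ hm6⟩).val with hf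
  have fdef : ∀ i (h : i < m+6), f i = (φ ⟨i, h⟩).val := by
    intro i h
    show (φ ⟨i % (m+6), _⟩).val = _
    have e : (⟨i % (m+6), Nat.mod_lt _ hm6⟩ : Fin (m+6)) = ⟨i, h⟩ :=
      Fin.ext (Nat.mod_eq_of_lt h)
    rw [e]
  have hfC : ∀ i, i < m → f i < m := by
    intro i h
    rw [fdef i (by omega)]
    exact phi_C m hm hm4 φ ⟨i, by omega⟩ h
  have hfinj : ∀ i j, i < m+6 → j < m+6 → f i = f j → i = j := by
    intro i j hi hj he
    rw [fdef i hi, fdef j hj] at he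
    have h2 := φ.injective (Fin.ext he)
    exact congrArg Fin.val h2
  have hfadj : ∀ i j, i < m → j < m → cyc m i j → cyc m (f i) (f j) := by
    intro i j hi hj hc
    have h1 : (Gamma m).Adj ⟨i, by omega⟩ ⟨j, by omega⟩ :=
      (cyc_adj m hm ⟨i, by omega⟩ ⟨j, by omega⟩ hi hj).2 hc
    have h2 := φ.map_adj_iff.2 h1
    rw [fdef i (by omega), fdef j (by omega)]
    exact (cyc_adj m hm _ _ (phi_C m hm hm4 φ _ hi) (phi_C m hm hm4 φ _ hj)).1 h2
  set k := f 0 with hk0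
  have hk : k < m := hfC 0 (by omega)
  have hXimg : ∀ r (hr : r < 4), m ≤ (φ ⟨m+r, by omega⟩).val ∧ (φ ⟨m+r, by omega⟩).val < m+4 :=
    fun r hr => phi_X m hm hm4 φ ⟨m+r, by omega⟩ (by exact Nat.le_add_right m r) (by
      exact (by omega : m+r < m+4))
  have key : ∀ r (hr : r < 4) j, j < m → (j%4 = r ∨ j%4 = (r+1)%4) →
      ((f j) %4 = ((φ ⟨m+r, by omega⟩).val - m) ∨
        (f j)%4 = (((φ ⟨m+r, by omega⟩).val - m)+1)%4) := by
    intro r hr j hj hmod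
    have hadj0 : (Gamma m).Adj ⟨m+r, by omega⟩ ⟨j, by omega⟩ :=
      (adjX m hm r hr ⟨m+r, by omega⟩ ⟨j, by omega⟩ rfl).2 (Or.inl ⟨hj, hmod⟩)
    have h2 := φ.map_adj_iff.2 hadj0
    have hs := hXimg r hr
    have himg := (adjX m hm ((φ ⟨m+r, by omega⟩).val - m) (by omega)
      (φ ⟨m+r, by omega⟩) (φ ⟨j, by omega⟩) (by omega)).1 h2
    rw [← fdef j (by omega)] at himg
    have hfj := hfC j hj
    omega
  have hPimg : ∀ t (ht : t < 2), m+4 ≤ (φ ⟨m+4+t, by omega⟩).val :=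
    fun t ht => phi_P m hm hm4 φ ⟨m+4+t, by omega⟩ (by exact Nat.le_add_right (m+4) t)
  have hf1 : f 1 = (k+1)%m ∨ f 1 = (k+(m-1))%m := by
    have hadj := hfadj 0 1 (by omega) (by omega) (by unfold cyc; omega)
    have b0 := hfC 0 (by omega)
    have b1 := hfC 1 (by omega)
    have mc1 := modcase m (k+1) (by omega) (by omega)
    have mc2 := modcase m (k+(m-1)) (by omega) (by omega)
    unfold cyc at hadj
    omega
  rcases hf1 with hf1 | hf1
  · -- rotation case
    have hfcyc := cyc_walk m k hm f hk hfC hfadj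
      (fun i j hi hj => hfinj i j (by omega) (by omega)) hk0.symm hf1
    have hXval : ∀ r (hr : r < 4), (φ ⟨m+r, by omega⟩).val = m + (r+k)%4 := by
      intro r hr
      have k1 := key r hr r (by omega) (by omega)
      have k2 := key r hr ((r+1)%4) (by omega) (by omega)
      rw [hfcyc r (by omega)] at k1
      rw [hfcyc ((r+1)%4) (by omega)] at k2
      have hs := hXimg r hr
      have e1 : ((k+r)%m)%4 = (k+r)%4 := Nat.mod_mod_of_dvd _ (by omega)
      have e2 : ((k+((r+1)%4))%m)%4 = (k+((r+1)%4))%4 := Nat.mod_mod_of_dvd _ (by omega)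
      omega
    have hPval : ∀ t (ht : t < 2), (φ ⟨m+4+t, by omega⟩).val = m+4+(t+k)%2 := by
      intro t ht
      have hadj0 : (Gamma m).Adj ⟨m+4+t, by omega⟩ ⟨t, by omega⟩ :=
        (adjP m hm t ht ⟨m+4+t, by omega⟩ ⟨t, by omega⟩ rfl).2
          (Or.inl ⟨show t < m by omega, show t%2 = t by omega⟩)
      have h2 := φ.map_adj_iff.2 hadj0
      have hi := hPimg t ht
      have hlt := (φ ⟨m+4+t, by omega⟩).isLt
      have himg := (adjP m hm ((φ ⟨m+4+t, by omega⟩).val - (m+4)) (by omega)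
        (φ ⟨m+4+t, by omega⟩) (φ ⟨t, by omega⟩) (by omega)).1 h2
      rw [← fdef t (by omega)] at himg
      rw [hfcyc t (by omega)] at himg
      have e : ((k+t)%m)%2 = (k+t)%2 := Nat.mod_mod_of_dvd _ (by omega)
      have hb : (k+t)%m < m := Nat.mod_lt _ (by omega)
      omega
    refine ⟨k, hk, ?_⟩
    intro v
    apply Fin.ext
    rw [gIso_pow_val m hm hm4 k v]
    have hvlt := v.isLt
    by_cases h1 : v.val < m
    · have hveq : v = ⟨v.val, hvlt⟩ := rfl
      rw [pwC m k v.val h1, ← Nat.add_comm k v.val]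
      rw [← hfcyc v.val h1, hveq, ← fdef v.val hvlt]
    · by_cases h2 : v.val < m+4
      · have hveq : v = ⟨m + (v.val - m), by omega⟩ :=
          Fin.ext (show v.val = m + (v.val - m) by omega)
        rw [hveq, hXval (v.val-m) (by omega)]
        show m + (v.val-m+k)%4 = pw m k (m + (v.val-m))
        rw [pwX m k (v.val-m) hm (by omega)]
      · have hveq : v = ⟨m+4 + (v.val - (m+4)), by omega⟩ :=
          Fin.ext (show v.val = m+4 + (v.val - (m+4)) by omega)
        rw [hveq, hPval (v.val-(m+4)) (by omega)]
        show m+4 + (v.val-(m+4)+k)%2 = pw m k (m+4 + (v.val-(m+4)))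
        rw [pwP m k (v.val-(m+4)) hm (by omega)]
  · -- reflection case : contradiction
    exfalso
    have hs := hXimg 0 (by omega)
    have k1 := key 0 (by omega) 0 (by omega) (by omega)
    have k2 := key 0 (by omega) 1 (by omega) (by omega)
    rw [hk0.symm] at k1
    rw [hf1] at k2
    have e2 : ((k+(m-1))%m)%4 = (k+(m-1))%4 := Nat.mod_mod_of_dvd _ (by omega)
    -- image of E
    have hadj0 : (Gamma m).Adj ⟨m+4+0, by omega⟩ ⟨0, by omega⟩ :=
      (adjP m hm 0 (by omega) ⟨m+4+0, by omega⟩ ⟨0, by omega⟩ rfl).2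
        (Or.inl ⟨show 0 < m by omega, show 0%2 = 0 by omega⟩)
    have h2 := φ.map_adj_iff.2 hadj0
    have hiE := hPimg 0 (by omega)
    have hltE := (φ ⟨m+4+0, by omega⟩).isLt
    have himgE := (adjP m hm ((φ ⟨m+4+0, by omega⟩).val - (m+4)) (by omega)
      (φ ⟨m+4+0, by omega⟩) (φ ⟨0, by omega⟩) (by omega)).1 h2
    rw [← fdef 0 (by omega)] at himgE
    rw [hk0.symm] at himgE
    -- image of the edge X0-E
    have hX0 := hXimg 0 (by omega)
    have hadjXE : (Gamma m).Adj ⟨m+0, by omega⟩ ⟨m+4+0, by omega⟩ :=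
      (adjX m hm 0 (by omega) ⟨m+0, by omega⟩ ⟨m+4+0, by omega⟩ rfl).2
        (Or.inr (show m+4+0 = m+4+0%2 by omega))
    have h3 := φ.map_adj_iff.2 hadjXE
    have himgXE := (adjX m hm ((φ ⟨m+0, by omega⟩).val - m) (by omega)
      (φ ⟨m+0, by omega⟩) (φ ⟨m+4+0, by omega⟩) (by omega)).1 h3
    have hb : (k+(m-1))%m < m := Nat.mod_lt _ (by omega)
    have hfb := hfC 0 (by omega)
    rw [hk0.symm] at hfb
    omega
lemma g_pow_m (m : ℕ) (hm : 4 ≤ m) (hm4 : m % 4 = 0) : (gIso m hm hm4) ^ m = 1 := by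
  apply DFunLike.ext
  intro v
  apply Fin.ext
  rw [gIso_pow_val m hm hm4 m v]
  show pw m m v.val = v.val
  have hvlt := v.isLt
  unfold pw
  split_ifs with h1 h2
  · rw [Nat.add_mod_right, Nat.mod_eq_of_lt h1]
  · omega
  · omega

lemma main_iso (m : ℕ) (hm : 4 ≤ m) (hm4 : m % 4 = 0) :
    Nonempty ((Gamma m ≃g Gamma m) ≃* Multiplicative (ZMod m)) := by
  haveI : NeZero m := ⟨by omega⟩
  set g := gIso m hm hm4 with hg
  have hgm := g_pow_m m hm hm4
  have hpow_mod : ∀ j : ℕ, g ^ (j % m) = g ^ j := fun j => (pow_eq_pow_mod j hgm).symm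
  have happly0 : ∀ j : ℕ, ((g ^ j) (⟨0, by omega⟩ : Fin (m+6))).val = j % m := by
    intro j
    rw [gIso_pow_val m hm hm4 j ⟨0, by omega⟩]
    show pw m j 0 = j % m
    unfold pw
    rw [if_pos (by omega)]
    rw [Nat.zero_add]
  refine ⟨MulEquiv.symm ⟨⟨fun x => g ^ (Multiplicative.toAdd x).val,
    fun φ => Multiplicative.ofAdd (((φ ⟨0, by omega⟩).val : ZMod m)), ?_, ?_⟩, ?_⟩⟩
  · -- left inverse
    intro x
    have h0 := happly0 (Multiplicative.toAdd x).val
    have hvlt : (Multiplicative.toAdd x).val < m := ZMod.val_lt _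
    simp only [h0]
    rw [Nat.mod_eq_of_lt hvlt]
    rw [ZMod.natCast_rightInverse _]
    rfl
  · -- right inverse
    intro φ
    obtain ⟨k, hk, hkv⟩ := rigid m hm hm4 φ
    have h0 : (φ ⟨0, by omega⟩).val = k := by
      rw [hkv ⟨0, by omega⟩, happly0 k, Nat.mod_eq_of_lt hk]
    show g ^ (((φ ⟨0, by omega⟩).val : ZMod m)).val = φ
    rw [h0, ZMod.val_cast_of_lt hk]
    exact (DFunLike.ext _ _ hkv).symm
  · -- multiplicative
    intro x y
    show g ^ (Multiplicative.toAdd x + Multiplicative.toAdd y).val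
      = g ^ (Multiplicative.toAdd x).val * g ^ (Multiplicative.toAdd y).val
    rw [ZMod.val_add, hpow_mod, pow_add]

/-- for every `n ≥ 2` there is a graph on `2^n + 6` vertices whose
    full automorphism group is isomorphic to `ℤ/2^n ℤ`. -/
theorem stmt8 (n : ℕ) (hn : 2 ≤ n) :
    ∃ Γ : SimpleGraph (Fin (2 ^ n + 6)),
      Nonempty ((Γ ≃g Γ) ≃* Multiplicative (ZMod (2 ^ n))) := by
  have hm : 4 ≤ 2^n := by
    calc (4:ℕ) = 2^2 := by norm_num
    _ ≤ 2^n := Nat.pow_le_pow_right (by norm_num) hn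
  have hdvd : (4:ℕ) ∣ 2^n := by
    have : (2:ℕ)^2 ∣ 2^n := pow_dvd_pow 2 hn
    simpa using this
  have hm4 : 2^n % 4 = 0 := by omega
  exact ⟨Gamma (2^n), main_iso (2^n) hm hm4⟩
end
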